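/- arXiv:1211.4968 — 6 statements merged into one kernel-verified Lean document; each statement's English description precedes it below -/
import Mathlib

section
/- Let $F$ be an infinite subset of $\mathbb{Z}$ that is self-similar with respect to affine maps $\varphi_i(x) = a_i x + b_i$ for $i = 1, \dots, n$, where $a_i, b_i \in \mathbb{Z}$ and $|a_i| > 1$ for each $i$. Then $\sum_{i=1}^n \frac{1}{|a_i|} \le 1$. -/
/-- A subset `F` of `ℤ` is self-similar with respect to the affine maps
`x ↦ a i * x + b i`: it is the disjoint union of its images under these maps. -/
def IsSelfSimilarInt (n : ℕ) (a b : Fin n → ℤ) (F : Set ℤ) : Prop :=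
  (F = ⋃ i, (fun x => a i * x + b i) '' F) ∧
    Pairwise fun i j =>
      Disjoint ((fun x => a i * x + b i) '' F) ((fun x => a j * x + b j) '' F)

/-- Iterated application of the affine maps along a word. -/
def psiAff {n : ℕ} (a b : Fin n → ℤ) (x : ℤ) : List (Fin n) → ℤ
  | [] => x
  | i :: t => a i * psiAff a b x t + b i

/-- Naghshineh's olympiad problem: for an infinite self-similar subset of `ℤ`
with respect to affine maps with `|a i| > 1`, one has `∑ 1/|a i| ≤ 1`. -/
theorem sum_inv_abs_le_one_of_selfSimilar
    (n : ℕ) (a b : Fin n → ℤ) (ha : ∀ i, 1 < |a i|)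
    (F : Set ℤ) (hF : F.Infinite)
    (hss : IsSelfSimilarInt n a b F) :
    ∑ i, (1 : ℝ) / |(a i : ℝ)| ≤ 1 := by
  classical
  by_contra hcon
  push_neg at hcon
  set s : ℝ := ∑ i, (1 : ℝ) / |(a i : ℝ)| with hs_def
  obtain ⟨x0, hx0⟩ := hF.nonempty
  obtain ⟨hun, hdisj⟩ := hss
  have ha2 : ∀ i, 2 ≤ |a i| := fun i => ha i
  have ha0 : ∀ i, a i ≠ 0 := by
    intro i h
    have := ha i
    simp [h] at this
  have himg : ∀ i, (fun x => a i * x + b i) '' F ⊆ F := by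
    intro i
    conv_rhs => rw [hun]
    exact Set.subset_iUnion (fun i => (fun x => a i * x + b i) '' F) i
  have hmem : ∀ l, psiAff a b x0 l ∈ F := by
    intro l
    induction l with
    | nil => exact hx0
    | cons i t ih => exact himg i ⟨_, ih, rfl⟩
  have hinj : ∀ l l' : List (Fin n), l.length = l'.length →
      psiAff a b x0 l = psiAff a b x0 l' → l = l' := by
    intro l
    induction l with
    | nil =>
      intro l' h _
      exact (List.length_eq_zero_iff.mp h.symm).symm
    | cons i t ih =>
      intro l' hlen heq
      cases l' with
      | nil => simp at hlen
      | cons j t' =>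
        rcases eq_or_ne i j with rfl | hij
        · have hpsi : psiAff a b x0 t = psiAff a b x0 t' := by
            have : a i * psiAff a b x0 t + b i = a i * psiAff a b x0 t' + b i := heq
            have := add_right_cancel this
            exact mul_left_cancel₀ (ha0 i) this
          have := ih t' (by simpa using hlen) hpsi
          rw [this]
        · exfalso
          have h1 : psiAff a b x0 (i :: t) ∈ (fun x => a i * x + b i) '' F :=
            ⟨_, hmem t, rfl⟩
          have h2 : psiAff a b x0 (i :: t) ∈ (fun x => a j * x + b j) '' F := by
            rw [heq]
            exact ⟨_, hmem t', rfl⟩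
          exact Set.disjoint_left.mp (hdisj hij) h1 h2
  set B : ℤ := ((Finset.univ.sup fun i => (b i).natAbs : ℕ) : ℤ) with hB_def
  have hB : ∀ i, |b i| ≤ B := by
    intro i
    have h : (b i).natAbs ≤ Finset.univ.sup fun i => (b i).natAbs :=
      Finset.le_sup (f := fun i => (b i).natAbs) (Finset.mem_univ i)
    rw [hB_def, Int.abs_eq_natAbs]
    exact_mod_cast h
  have hB0 : (0 : ℤ) ≤ B := Int.natCast_nonneg _
  set C : ℤ := |x0| + B + 1 with hC_def
  have hC1 : (1 : ℤ) ≤ C := by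
    have := abs_nonneg x0
    omega
  -- the key bound on the orbit points
  have hPb : ∀ l : List (Fin n),
      (1 ≤ (l.map fun i => |a i|).prod) ∧
      |psiAff a b x0 l| ≤ (l.map fun i => |a i|).prod * |x0| +
        ((l.map fun i => |a i|).prod - 1) * B := by
    intro l
    induction l with
    | nil => simp [psiAff]
    | cons i t ih =>
      obtain ⟨hP1, hPb⟩ := ih
      set P : ℤ := (t.map fun i => |a i|).prod with hP_def
      have hA : 2 ≤ |a i| := ha2 i
      constructor
      · simp only [List.map_cons, List.prod_cons]
        nlinarith
      · simp only [List.map_cons, List.prod_cons, psiAff]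
        have h1 : |a i * psiAff a b x0 t + b i| ≤ |a i| * |psiAff a b x0 t| + |b i| := by
          calc |a i * psiAff a b x0 t + b i| ≤ |a i * psiAff a b x0 t| + |b i| :=
                abs_add_le _ _
            _ = |a i| * |psiAff a b x0 t| + |b i| := by rw [abs_mul]
        have h2 := hB i
        have h3 := abs_nonneg (psiAff a b x0 t)
        have h4 := abs_nonneg x0
        nlinarith [mul_le_mul_of_nonneg_left hPb (by linarith : (0:ℤ) ≤ |a i|)]
  have hbound : ∀ l : List (Fin n), |psiAff a b x0 l| ≤ (l.map fun i => |a i|).prod * C := by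
    intro l
    obtain ⟨hP1, hPb⟩ := hPb l
    have h4 := abs_nonneg x0
    nlinarith
  -- the key counting inequality
  have key : ∀ k : ℕ, s ^ k ≤ 3 * (C : ℝ) * ((k : ℝ) + 1) ^ n := by
    intro k
    set N : (Fin k → Fin n) → ℤ := fun p => ∏ j, |a (p j)| with hN_def
    set Φ : (Fin k → Fin n) → ℤ := fun p => psiAff a b x0 (List.ofFn p) with hΦ_def
    have hNP : ∀ p, N p = ((List.ofFn p).map fun i => |a i|).prod := by
      intro p
      rw [List.map_ofFn, List.prod_ofFn]
      rfl
    have hN1 : ∀ p, 1 ≤ N p := by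
      intro p
      have : 0 < N p := Finset.prod_pos fun j _ => abs_pos.mpr (ha0 _)
      omega
    have hΦIcc : ∀ p, Φ p ∈ Finset.Icc (-(N p * C)) (N p * C) := by
      intro p
      have := hbound (List.ofFn p)
      rw [← hNP] at this
      rw [Finset.mem_Icc]
      constructor
      · linarith [neg_abs_le (Φ p)]
      · linarith [le_abs_self (Φ p)]
    have hΦinj : ∀ p q : Fin k → Fin n, Φ p = Φ q → p = q := by
      intro p q h
      exact List.ofFn_injective (hinj _ _ (by simp) h)
    -- expansion of s^k
    have hexp : s ^ k = ∑ p : Fin k → Fin n, (1 / (N p : ℝ)) := by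
      rw [hs_def, Finset.sum_pow', Fintype.piFinset_univ]
      refine Finset.sum_congr rfl fun p _ => ?_
      rw [hN_def]
      push_cast
      rw [one_div, ← Finset.prod_inv_distrib]
      simp [one_div]
    -- fiberwise decomposition over the values of N
    have hfib : ∑ p : Fin k → Fin n, (1 / (N p : ℝ)) =
        ∑ v ∈ Finset.univ.image N, ∑ p ∈ Finset.univ.filter (fun p => N p = v),
          (1 / (v : ℝ)) := by
      rw [← Finset.sum_fiberwise_of_maps_to (fun p _ => Finset.mem_image_of_mem N
        (Finset.mem_univ p)) (fun p => (1 / (N p : ℝ)))]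
      refine Finset.sum_congr rfl fun v hv => Finset.sum_congr rfl fun p hp => ?_
      rw [(Finset.mem_filter.mp hp).2]
    -- each fiber contributes at most 3C
    have hinner : ∀ v ∈ Finset.univ.image N,
        ∑ p ∈ Finset.univ.filter (fun p => N p = v), (1 / (v : ℝ)) ≤ 3 * (C : ℝ) := by
      intro v hv
      obtain ⟨p0, -, hp0⟩ := Finset.mem_image.mp hv
      have hv1 : (1 : ℤ) ≤ v := hp0 ▸ hN1 p0
      -- the fiber injects into Icc (-(v*C)) (v*C)
      have hcard : (Finset.univ.filter (fun p => N p = v)).card ≤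
          (Finset.Icc (-(v * C)) (v * C)).card := by
        apply Finset.card_le_card_of_injOn Φ
        · intro p hp
          have := hΦIcc p
          rwa [(Finset.mem_filter.mp hp).2] at this
        · intro p _ q _ h
          exact hΦinj p q h
      have hIcc : ((Finset.Icc (-(v * C)) (v * C)).card : ℝ) = 2 * v * C + 1 := by
        rw [Int.card_Icc]
        have h1 : (0 : ℤ) ≤ v * C + 1 - -(v * C) := by nlinarith
        have h2 : (((v * C + 1 - -(v * C)).toNat : ℤ) : ℝ) =
            ((v * C + 1 - -(v * C) : ℤ) : ℝ) := by
          exact_mod_cast congrArg (fun z : ℤ => (z : ℝ)) (Int.toNat_of_nonneg h1)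
        push_cast at h2 ⊢
        linarith
      rw [Finset.sum_const, nsmul_eq_mul]
      have hvr : (1 : ℝ) ≤ (v : ℝ) := by exact_mod_cast hv1
      have hCr : (1 : ℝ) ≤ (C : ℝ) := by exact_mod_cast hC1
      have hcr : ((Finset.univ.filter (fun p => N p = v)).card : ℝ) ≤ 2 * v * C + 1 := by
        rw [← hIcc]
        exact_mod_cast hcard
      have hvpos : (0 : ℝ) < (v : ℝ) := by linarith
      calc ((Finset.univ.filter (fun p => N p = v)).card : ℝ) * (1 / (v : ℝ))
          ≤ (2 * v * C + 1) * (1 / (v : ℝ)) := by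
            apply mul_le_mul_of_nonneg_right hcr
            positivity
        _ ≤ 3 * (C : ℝ) := by
            rw [mul_one_div, div_le_iff₀ hvpos]
            nlinarith
    -- the number of fibers is at most (k+1)^n
    have hcardim : ((Finset.univ.image N).card : ℝ) ≤ ((k : ℝ) + 1) ^ n := by
      set cnt : (Fin k → Fin n) → (Fin n → ℕ) :=
        fun p i => (Finset.univ.filter fun j => p j = i).card with hcnt_def
      have hfact : ∀ p, N p = ∏ i : Fin n, |a i| ^ (cnt p i) := by
        intro p
        show (∏ j, |a (p j)|) = ∏ i : Fin n, |a i| ^ (cnt p i)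
        rw [← Finset.prod_fiberwise_of_maps_to (fun j _ => Finset.mem_univ (p j))
          (fun j => |a (p j)|)]
        refine Finset.prod_congr rfl fun i _ => ?_
        rw [Finset.prod_congr rfl (fun j hj => by
          rw [(Finset.mem_filter.mp hj).2] : ∀ j ∈ Finset.univ.filter (fun j => p j = i),
            |a (p j)| = |a i|), Finset.prod_const]
      have hNcomp : N = (fun c : Fin n → ℕ => ∏ i : Fin n, |a i| ^ (c i)) ∘ cnt :=
        funext hfact
      have h1 : (Finset.univ.image N).card ≤ (Finset.univ.image cnt).card := by
        rw [hNcomp, ← Finset.image_image]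
        exact Finset.card_image_le
      have h2 : Finset.univ.image cnt ⊆
          Fintype.piFinset (fun _ : Fin n => Finset.range (k + 1)) := by
        intro c hc
        obtain ⟨p, -, hp⟩ := Finset.mem_image.mp hc
        rw [Fintype.mem_piFinset]
        intro i
        rw [Finset.mem_range, ← hp]
        have := Finset.card_filter_le Finset.univ (fun j => p j = i)
        simpa using Nat.lt_succ_of_le this
      have h3 : (Finset.univ.image cnt).card ≤ (k + 1) ^ n := by
        have h4 := Finset.card_le_card h2
        rwa [Fintype.card_piFinset_const, Finset.card_range] at h4
      calc ((Finset.univ.image N).card : ℝ) ≤ ((Finset.univ.image cnt).card : ℝ) := by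
            exact_mod_cast h1
        _ ≤ ((k + 1 : ℕ) : ℝ) ^ n := by exact_mod_cast h3
        _ = ((k : ℝ) + 1) ^ n := by push_cast; ring
    -- put everything together
    have hCpos : (0 : ℝ) < 3 * (C : ℝ) := by
      have : (1 : ℝ) ≤ (C : ℝ) := by exact_mod_cast hC1
      linarith
    calc s ^ k = ∑ p : Fin k → Fin n, (1 / (N p : ℝ)) := hexp
      _ = ∑ v ∈ Finset.univ.image N, ∑ p ∈ Finset.univ.filter (fun p => N p = v),
          (1 / (v : ℝ)) := hfib
      _ ≤ ∑ v ∈ Finset.univ.image N, 3 * (C : ℝ) := Finset.sum_le_sum hinner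
      _ = ((Finset.univ.image N).card : ℝ) * (3 * (C : ℝ)) := by
          rw [Finset.sum_const, nsmul_eq_mul]
      _ ≤ ((k : ℝ) + 1) ^ n * (3 * (C : ℝ)) := by
          apply mul_le_mul_of_nonneg_right hcardim (le_of_lt hCpos)
      _ = 3 * (C : ℝ) * ((k : ℝ) + 1) ^ n := by ring
  -- now derive a contradiction: exponential beats polynomial
  set D : ℝ := 3 * (C : ℝ) with hD_def
  have hCr : (1 : ℝ) ≤ (C : ℝ) := by exact_mod_cast hC1
  have hDpos : (0 : ℝ) < D := by rw [hD_def]; linarith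
  have hlo := isLittleO_pow_const_const_pow_of_one_lt (R := ℝ) n hcon
  have hc : (0 : ℝ) < 1 / (D * 2 ^ n * 2) := by positivity
  obtain ⟨m, hm, hm1⟩ := ((hlo.def hc).and (Filter.eventually_ge_atTop 1)).exists
  have hm1' : (1 : ℝ) ≤ (m : ℝ) := by exact_mod_cast hm1
  have hsm : (0 : ℝ) < s ^ m := pow_pos (by linarith) m
  have hnorm : (m : ℝ) ^ n ≤ (1 / (D * 2 ^ n * 2)) * s ^ m := by
    rw [Real.norm_eq_abs, Real.norm_eq_abs,
      abs_of_nonneg (by positivity : (0 : ℝ) ≤ (m : ℝ) ^ n), abs_of_nonneg hsm.le] at hm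
    exact hm
  have h5 : ((m : ℝ) + 1) ^ n ≤ (2 * (m : ℝ)) ^ n :=
    pow_le_pow_left₀ (by positivity) (by linarith) n
  have h6 : s ^ m ≤ D * (2 * (m : ℝ)) ^ n :=
    le_trans (key m) (mul_le_mul_of_nonneg_left h5 hDpos.le)
  rw [mul_pow] at h6
  have h8 : s ^ m ≤ D * ((2 : ℝ) ^ n * ((1 / (D * 2 ^ n * 2)) * s ^ m)) := by
    refine le_trans h6 (mul_le_mul_of_nonneg_left ?_ hDpos.le)
    exact mul_le_mul_of_nonneg_left hnorm (by positivity)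
  have hD0 : D ≠ 0 := ne_of_gt hDpos
  have h2n : (2 : ℝ) ^ n ≠ 0 := by positivity
  have h9 : D * ((2 : ℝ) ^ n * ((1 / (D * 2 ^ n * 2)) * s ^ m)) = s ^ m / 2 := by
    field_simp
  rw [h9] at h8
  linarith
end

section
/- Let $F$ be an infinite subset of $\mathbb{Z}$ that is self-similar with respect to affine maps $\varphi_i(x) = a_i x + b_i$ for $i = 1, \dots, n$, where $a_i, b_i \in \mathbb{Z}$ and $|a_i| > 1$. If $s \ge 0$ is a real number with $\sum_{i=1}^n |a_i|^{-s} = 1$, then $s \le 1$; that is, the fractal dimension of any infinite self-similar subset of $\mathbb{Z}$ is at most $1$. -/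
namespace SelfSimilarAux

/-- Iterated application of the affine maps along a word. -/
def phiIter {n : ℕ} (a b : Fin n → ℤ) : List (Fin n) → ℤ → ℤ
  | [], x => x
  | i :: w, x => a i * phiIter a b w x + b i

variable {n : ℕ} (a b : Fin n → ℤ)

@[simp] lemma phiIter_nil (x : ℤ) : phiIter a b [] x = x := rfl

@[simp] lemma phiIter_cons (i : Fin n) (w : List (Fin n)) (x : ℤ) :
    phiIter a b (i :: w) x = a i * phiIter a b w x + b i := rfl

/-- Product of the absolute values of the multipliers along a word. -/
def P (w : List (Fin n)) : ℕ := (w.map fun i => (a i).natAbs).prod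

@[simp] lemma P_nil : P a ([] : List (Fin n)) = 1 := rfl

@[simp] lemma P_cons (i : Fin n) (w : List (Fin n)) :
    P a (i :: w) = (a i).natAbs * P a w := rfl

lemma phiIter_mem {F : Set ℤ} (hss : IsSelfSimilarInt n a b F)
    (w : List (Fin n)) {x : ℤ} (hx : x ∈ F) : phiIter a b w x ∈ F := by
  induction w with
  | nil => exact hx
  | cons i w ih =>
    have hmem : phiIter a b (i :: w) x ∈ (fun y => a i * y + b i) '' F :=
      ⟨phiIter a b w x, ih, (phiIter_cons a b i w x).symm⟩
    rw [hss.1]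
    exact Set.mem_iUnion.2 ⟨i, hmem⟩

lemma phiIter_ne (ha : ∀ i, 1 < |a i|) {F : Set ℤ}
    (hss : IsSelfSimilarInt n a b F) {x : ℤ} (hx : x ∈ F) :
    ∀ w w' : List (Fin n), w.length = w'.length → w ≠ w' →
      phiIter a b w x ≠ phiIter a b w' x := by
  intro w
  induction w with
  | nil =>
    intro w' hl hne
    cases w' with
    | nil => exact absurd rfl hne
    | cons i' w'' => simp at hl
  | cons i w ih =>
    intro w' hl hne
    cases w' with
    | nil => simp at hl
    | cons i' w'' =>
      by_cases hii : i = i'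
      · subst hii
        have hw : w ≠ w'' := by
          rintro rfl; exact hne rfl
        have hne' := ih w'' (by simpa using hl) hw
        simp only [phiIter_cons]
        intro h
        have hai : a i ≠ 0 := by
          intro h0
          have := ha i
          rw [h0] at this
          simp at this
        exact hne' (mul_left_cancel₀ hai (by linarith))
      · intro h
        have h1 : phiIter a b (i :: w) x ∈ (fun y => a i * y + b i) '' F :=
          ⟨phiIter a b w x, phiIter_mem a b hss w hx, (phiIter_cons a b i w x).symm⟩
        have h2 : phiIter a b (i' :: w'') x ∈ (fun y => a i' * y + b i') '' F :=
          ⟨phiIter a b w'' x, phiIter_mem a b hss w'' hx, (phiIter_cons a b i' w'' x).symm⟩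
        rw [← h] at h2
        exact Set.disjoint_left.1 (hss.2 hii) h1 h2

lemma two_le_natAbs (ha : ∀ i, 1 < |a i|) (i : Fin n) : 2 ≤ (a i).natAbs := by
  have h := ha i
  rw [Int.abs_eq_natAbs] at h
  exact_mod_cast h

lemma pow_length_le_P (ha : ∀ i, 1 < |a i|) (w : List (Fin n)) :
    2 ^ w.length ≤ P a w := by
  induction w with
  | nil => simp
  | cons i w ih =>
    simp only [List.length_cons, P_cons, pow_succ, mul_comm (2 ^ w.length) 2]
    exact Nat.mul_le_mul (two_le_natAbs a ha i) ih

lemma P_le_pow (A : ℕ) (hA : ∀ i, (a i).natAbs ≤ A) (w : List (Fin n)) :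
    P a w ≤ A ^ w.length := by
  induction w with
  | nil => simp
  | cons i w ih =>
    simp only [List.length_cons, P_cons, pow_succ, mul_comm (A ^ w.length) A]
    exact Nat.mul_le_mul (hA i) ih

lemma phiIter_abs_le (ha : ∀ i, 1 < |a i|) (B : ℤ) (hB : 0 ≤ B)
    (hb : ∀ i, |b i| ≤ B) (x : ℤ) (w : List (Fin n)) :
    |phiIter a b w x| ≤ (P a w : ℤ) * (|x| + 2 * B + 1) - B := by
  induction w with
  | nil => simp; linarith
  | cons i w ih =>
    have habs : |a i| = ((a i).natAbs : ℤ) := Int.abs_eq_natAbs _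
    have h2 : (2 : ℤ) ≤ ((a i).natAbs : ℤ) := by
      exact_mod_cast two_le_natAbs a ha i
    have h1 : (1 : ℤ) ≤ (P a w : ℤ) := by
      have := pow_length_le_P a ha w
      have h2p : (1 : ℕ) ≤ 2 ^ w.length := Nat.one_le_two_pow
      exact_mod_cast le_trans h2p this
    have hx0 : 0 ≤ |x| := abs_nonneg x
    calc |phiIter a b (i :: w) x| = |a i * phiIter a b w x + b i| := by rw [phiIter_cons]
      _ ≤ |a i * phiIter a b w x| + |b i| := abs_add_le _ _
      _ = |a i| * |phiIter a b w x| + |b i| := by rw [abs_mul]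
      _ ≤ ((a i).natAbs : ℤ) * ((P a w : ℤ) * (|x| + 2 * B + 1) - B) + B := by
        rw [habs]
        have hb' := hb i
        have hai0 : (0 : ℤ) ≤ ((a i).natAbs : ℤ) := by positivity
        have := mul_le_mul_of_nonneg_left ih hai0
        linarith
      _ ≤ (P a (i :: w) : ℤ) * (|x| + 2 * B + 1) - B := by
        have : (P a (i :: w) : ℤ) = ((a i).natAbs : ℤ) * (P a w : ℤ) := by
          simp [P_cons]
        rw [this]
        nlinarith

end SelfSimilarAux

open SelfSimilarAux Finset in
/-- The fractal dimension of an infinite self-similar subset of `ℤ` is at most `1`. -/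
theorem fractalDim_le_one_of_selfSimilar
    (n : ℕ) (a b : Fin n → ℤ) (ha : ∀ i, 1 < |a i|)
    (F : Set ℤ) (hF : F.Infinite)
    (hss : IsSelfSimilarInt n a b F)
    (s : ℝ) (hs : 0 ≤ s) (hbox : ∑ i, ((|a i| : ℝ)) ^ (-s) = 1) :
    s ≤ 1 := by
  classical
  rcases Nat.eq_zero_or_pos n with hn | hn
  · subst hn
    simp at hbox
  by_contra hcon
  push_neg at hcon
  obtain ⟨x₀, hx₀⟩ := hF.nonempty
  -- constants
  set B : ℤ := ∑ i, |b i| with hBdef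
  have hB : 0 ≤ B := Finset.sum_nonneg fun i _ => abs_nonneg _
  have hbB : ∀ i, |b i| ≤ B :=
    fun i => Finset.single_le_sum (fun j _ => abs_nonneg (b j)) (mem_univ i)
  set K : ℤ := |x₀| + 2 * B + 1 with hKdef
  have hK1 : 1 ≤ K := by
    have := abs_nonneg x₀
    simp only [hKdef]; linarith
  set A : ℕ := ∑ i, (a i).natAbs with hAdef
  have hA : ∀ i, (a i).natAbs ≤ A :=
    fun i => Finset.single_le_sum (f := fun j => (a j).natAbs)
      (fun j _ => Nat.zero_le _) (mem_univ i)
  set r : ℝ := (2 : ℝ) ^ (1 - s) with hrdef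
  have hr0 : 0 < r := Real.rpow_pos_of_pos (by norm_num) _
  have hr1 : r < 1 :=
    Real.rpow_lt_one_of_one_lt_of_neg (by norm_num) (by linarith)
  -- the counting bound
  have hcount : ∀ (k : ℕ) (T : ℕ),
      (((univ : Finset (Fin k → Fin n)).filter
        fun w => P a (List.ofFn w) ≤ T).card : ℝ) ≤ 2 * (T : ℝ) * (K : ℝ) + 1 := by
    intro k T
    set S := (univ : Finset (Fin k → Fin n)).filter fun w => P a (List.ofFn w) ≤ T
      with hSdef
    have hmaps : ∀ w ∈ S, phiIter a b (List.ofFn w) x₀ ∈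
        Finset.Icc (-(T * K)) (T * K) := by
      intro w hw
      have hPT : P a (List.ofFn w) ≤ T := (Finset.mem_filter.1 hw).2
      have hbound := phiIter_abs_le a b ha B hB hbB x₀ (List.ofFn w)
      have hPK : (P a (List.ofFn w) : ℤ) * K ≤ (T : ℤ) * K := by
        have : (P a (List.ofFn w) : ℤ) ≤ (T : ℤ) := by exact_mod_cast hPT
        exact mul_le_mul_of_nonneg_right this (by linarith)
      rw [Finset.mem_Icc, ← abs_le]
      calc |phiIter a b (List.ofFn w) x₀|
          ≤ (P a (List.ofFn w) : ℤ) * K - B := hbound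
        _ ≤ (T : ℤ) * K := by linarith
    have hinj : Set.InjOn (fun w => phiIter a b (List.ofFn w) x₀) (↑S : Set (Fin k → Fin n)) := by
      intro w hw w' hw' heq
      by_contra hne
      exact phiIter_ne a b ha hss hx₀ (List.ofFn w) (List.ofFn w')
        (by simp) (fun h => hne (List.ofFn_injective h)) heq
    have hcard := Finset.card_le_card_of_injOn _ hmaps hinj
    have hIcc : (Finset.Icc (-(T * K)) (T * K)).card = (2 * (T : ℤ) * K + 1).toNat := by
      rw [Int.card_Icc]
      congr 1
      ring
    rw [hIcc] at hcard
    have hTK : (0 : ℤ) ≤ 2 * (T : ℤ) * K + 1 := by positivity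
    have hcard' : (S.card : ℤ) ≤ 2 * (T : ℤ) * K + 1 := by
      calc (S.card : ℤ) ≤ (((2 * (T : ℤ) * K + 1).toNat : ℕ) : ℤ) := by exact_mod_cast hcard
        _ = 2 * (T : ℤ) * K + 1 := Int.toNat_of_nonneg hTK
    calc (S.card : ℝ) ≤ ((2 * (T : ℤ) * K + 1 : ℤ) : ℝ) := by exact_mod_cast hcard'
      _ = 2 * (T : ℝ) * (K : ℝ) + 1 := by push_cast; ring
  -- the key inequality for every k
  have hkey : ∀ k : ℕ, (1 : ℝ) ≤ 8 * (K : ℝ) * (1 - r)⁻¹ * r ^ k := by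
    intro k
    -- step 1: the sum identity
    have hsum1 : (1 : ℝ) = ∑ w : Fin k → Fin n, ((P a (List.ofFn w) : ℝ)) ^ (-s) := by
      have habs : ∀ i : Fin n, (|a i| : ℝ) = (((a i).natAbs : ℕ) : ℝ) := by
        intro i
        rw [Nat.cast_natAbs]
        exact Int.cast_abs.symm
      calc (1 : ℝ) = (∑ i, ((|a i| : ℝ)) ^ (-s)) ^ k := by rw [hbox]; simp
        _ = ∑ w : Fin k → Fin n, ∏ j, ((((a (w j)).natAbs : ℕ) : ℝ)) ^ (-s) := by
            rw [Fintype.sum_pow]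
            congr 1
            ext w
            congr 1
            ext j
            rw [habs (w j)]
        _ = ∑ w : Fin k → Fin n, ((P a (List.ofFn w) : ℝ)) ^ (-s) := by
            refine Finset.sum_congr rfl fun w _ => ?_
            rw [Real.finset_prod_rpow _ _ (fun j _ => by positivity) (-s)]
            congr 1
            have hPw : P a (List.ofFn w) = ∏ j, (a (w j)).natAbs := by
              simp [P, List.map_ofFn, Fin.prod_ofFn, Function.comp]
            rw [hPw]
            push_cast
            rfl
    -- step 2: group by the dyadic size of P
    set lg : (Fin k → Fin n) → ℕ := fun w => Nat.log 2 (P a (List.ofFn w)) with hlgdef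
    have hP1 : ∀ w : Fin k → Fin n, 1 ≤ P a (List.ofFn w) := by
      intro w
      calc 1 ≤ 2 ^ (List.ofFn w).length := Nat.one_le_two_pow
        _ ≤ P a (List.ofFn w) := pow_length_le_P a ha _
    set M : ℕ := Nat.log 2 (A ^ k) with hMdef
    have hmapsJ : ∀ w ∈ (univ : Finset (Fin k → Fin n)), lg w ∈ Finset.Icc k M := by
      intro w _
      rw [Finset.mem_Icc]
      constructor
      · rw [Nat.le_log_iff_pow_le (by norm_num) (by have := hP1 w; omega)]
        calc 2 ^ k = 2 ^ (List.ofFn w).length := by simp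
          _ ≤ P a (List.ofFn w) := pow_length_le_P a ha _
      · exact Nat.log_mono_right
          (by simpa using P_le_pow a A hA (List.ofFn w))
    have hgroup := Finset.sum_fiberwise_of_maps_to hmapsJ
      (fun w => ((P a (List.ofFn w) : ℝ)) ^ (-s))
    -- bound each fiber
    have hfiber : ∀ j ∈ Finset.Icc k M,
        (∑ w ∈ (univ : Finset (Fin k → Fin n)).filter (fun w => lg w = j),
          ((P a (List.ofFn w) : ℝ)) ^ (-s)) ≤ 8 * (K : ℝ) * r ^ j := by
      intro j hj
      have hjk : k ≤ j := (Finset.mem_Icc.1 hj).1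
      have hterm : ∀ w ∈ (univ : Finset (Fin k → Fin n)).filter (fun w => lg w = j),
          ((P a (List.ofFn w) : ℝ)) ^ (-s) ≤ ((2 : ℝ) ^ j) ^ (-s) := by
        intro w hw
        have hlgw : lg w = j := (Finset.mem_filter.1 hw).2
        have h2j : (2 : ℕ) ^ j ≤ P a (List.ofFn w) := by
          rw [← hlgw]
          exact Nat.pow_log_le_self 2 (by have := hP1 w; omega)
        have h2j' : (2 : ℝ) ^ j ≤ (P a (List.ofFn w) : ℝ) := by exact_mod_cast h2j
        exact Real.rpow_le_rpow_of_nonpos (by positivity) h2j' (by linarith)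
      have hsub : (univ : Finset (Fin k → Fin n)).filter (fun w => lg w = j) ⊆
          (univ : Finset (Fin k → Fin n)).filter
            (fun w => P a (List.ofFn w) ≤ 2 ^ (j + 1)) := by
        intro w hw
        have hlgw : lg w = j := (Finset.mem_filter.1 hw).2
        rw [Finset.mem_filter]
        refine ⟨mem_univ w, ?_⟩
        have hlgw' : Nat.log 2 (P a (List.ofFn w)) = j := hlgw
        have := Nat.lt_pow_succ_log_self (b := 2) (by norm_num) (P a (List.ofFn w))
        rw [hlgw'] at this
        simp only [Nat.succ_eq_add_one] at this
        omega
      have hcard : (((univ : Finset (Fin k → Fin n)).filter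
          (fun w => lg w = j)).card : ℝ) ≤ 8 * (K : ℝ) * (2 : ℝ) ^ j := by
        have h1 : (((univ : Finset (Fin k → Fin n)).filter
            (fun w => lg w = j)).card : ℝ) ≤
            (((univ : Finset (Fin k → Fin n)).filter
              (fun w => P a (List.ofFn w) ≤ 2 ^ (j + 1))).card : ℝ) := by
          exact_mod_cast Finset.card_le_card hsub
        have h2 := hcount k (2 ^ (j + 1))
        push_cast at h2
        have hKR : (1 : ℝ) ≤ (K : ℝ) := by exact_mod_cast hK1
        have h1pow : (1 : ℝ) ≤ (2 : ℝ) ^ j := one_le_pow₀ (by norm_num)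
        nlinarith [pow_pos (show (0:ℝ) < 2 by norm_num) j, pow_succ (2:ℝ) j]
      calc (∑ w ∈ (univ : Finset (Fin k → Fin n)).filter (fun w => lg w = j),
            ((P a (List.ofFn w) : ℝ)) ^ (-s))
          ≤ ∑ w ∈ (univ : Finset (Fin k → Fin n)).filter (fun w => lg w = j),
            ((2 : ℝ) ^ j) ^ (-s) := Finset.sum_le_sum hterm
        _ = (((univ : Finset (Fin k → Fin n)).filter
            (fun w => lg w = j)).card : ℝ) * ((2 : ℝ) ^ j) ^ (-s) := by
            rw [Finset.sum_const, nsmul_eq_mul]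
        _ ≤ (8 * (K : ℝ) * (2 : ℝ) ^ j) * ((2 : ℝ) ^ j) ^ (-s) := by
            have : (0 : ℝ) ≤ ((2 : ℝ) ^ j) ^ (-s) := Real.rpow_nonneg (by positivity) _
            exact mul_le_mul_of_nonneg_right hcard this
        _ = 8 * (K : ℝ) * r ^ j := by
            rw [hrdef]
            rw [← Real.rpow_natCast (2 : ℝ) j, ← Real.rpow_natCast ((2:ℝ) ^ (1 - s)) j,
              ← Real.rpow_mul (by norm_num), ← Real.rpow_mul (by norm_num),
              mul_assoc, ← Real.rpow_add (by norm_num)]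
            ring_nf
        -- end calc
    -- step 3: sum the geometric series
    have hgeom : (∑ j ∈ Finset.Icc k M, r ^ j) ≤ r ^ k * (1 - r)⁻¹ := by
      have : Finset.Icc k M = Finset.Ico k (M + 1) := by
        rw [Finset.Ico_add_one_right_eq_Icc]
      rw [this, Finset.sum_Ico_eq_sum_range]
      have : ∀ j ∈ Finset.range (M + 1 - k), r ^ (k + j) = r ^ k * r ^ j := by
        intro j _
        rw [pow_add]
      rw [Finset.sum_congr rfl this, ← Finset.mul_sum]
      have hsum_le : (∑ j ∈ Finset.range (M + 1 - k), r ^ j) ≤ (1 - r)⁻¹ := by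
        have := Summable.sum_le_tsum (Finset.range (M + 1 - k))
          (fun i _ => le_of_lt (pow_pos hr0 i))
          (summable_geometric_of_lt_one hr0.le hr1)
        rwa [tsum_geometric_of_lt_one hr0.le hr1] at this
      exact mul_le_mul_of_nonneg_left hsum_le (le_of_lt (pow_pos hr0 k))
    calc (1 : ℝ) = ∑ w : Fin k → Fin n, ((P a (List.ofFn w) : ℝ)) ^ (-s) := hsum1
      _ = ∑ j ∈ Finset.Icc k M, ∑ w ∈ (univ : Finset (Fin k → Fin n)).filter
            (fun w => lg w = j), ((P a (List.ofFn w) : ℝ)) ^ (-s) := hgroup.symm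
      _ ≤ ∑ j ∈ Finset.Icc k M, 8 * (K : ℝ) * r ^ j := Finset.sum_le_sum hfiber
      _ = 8 * (K : ℝ) * ∑ j ∈ Finset.Icc k M, r ^ j := by rw [Finset.mul_sum]
      _ ≤ 8 * (K : ℝ) * (r ^ k * (1 - r)⁻¹) := by
          have hKR : (0 : ℝ) ≤ 8 * (K : ℝ) := by
            have : (1 : ℝ) ≤ (K : ℝ) := by exact_mod_cast hK1
            linarith
          exact mul_le_mul_of_nonneg_left hgeom hKR
      _ = 8 * (K : ℝ) * (1 - r)⁻¹ * r ^ k := by ring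
  -- final contradiction
  have hC : (0 : ℝ) < 8 * (K : ℝ) * (1 - r)⁻¹ := by
    have h1 : (1 : ℝ) ≤ (K : ℝ) := by exact_mod_cast hK1
    have h2 : (0 : ℝ) < 1 - r := by linarith
    positivity
  obtain ⟨k, hk⟩ := exists_pow_lt_of_lt_one (x := (8 * (K : ℝ) * (1 - r)⁻¹)⁻¹)
    (by positivity) hr1
  have := hkey k
  have hlt : 8 * (K : ℝ) * (1 - r)⁻¹ * r ^ k < 1 := by
    calc 8 * (K : ℝ) * (1 - r)⁻¹ * r ^ k
        < 8 * (K : ℝ) * (1 - r)⁻¹ * (8 * (K : ℝ) * (1 - r)⁻¹)⁻¹ :=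
          mul_lt_mul_of_pos_left hk hC
      _ = 1 := mul_inv_cancel₀ (ne_of_gt hC)
  linarith
end

section
/- (Mahdavifar–Naghshineh, well-definedness of fractal dimension in $\mathbb{Z}$.) Let $F$ be an infinite subset of $\mathbb{Z}$. Suppose $F$ is self-similar with respect to affine maps $\varphi_i(x) = a_i x + b_i$ for $i = 1, \dots, n$ (with $a_i, b_i \in \mathbb{Z}$, $|a_i| > 1$) and also self-similar with respect to affine maps $\psi_j(x) = c_j x + d_j$ for $j = 1, \dots, m$ (with $c_j, d_j \in \mathbb{Z}$, $|c_j| > 1$). If $s \ge 0$ satisfies $\sum_{i=1}^n |a_i|^{-s} = 1$ and $t \ge 0$ satisfies $\sum_{j=1}^m |c_j|^{-t} = 1$, then $s = t$. In other words, the fractal dimension of $F$ does not depend on the choice of similarity maps. -/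
open Set Finset Filter

noncomputable def cntF (F : Set ℤ) (R : ℕ) : ℕ := (F ∩ Set.Icc (-(R:ℤ)) (R:ℤ)).ncard

lemma cntF_finite (F : Set ℤ) (R : ℕ) : (F ∩ Set.Icc (-(R:ℤ)) (R:ℤ)).Finite :=
  (Set.finite_Icc _ _).subset Set.inter_subset_right

lemma cntF_mono (F : Set ℤ) {R R' : ℕ} (h : R ≤ R') : cntF F R ≤ cntF F R' :=
  Set.ncard_le_ncard (Set.inter_subset_inter_right _ (Set.Icc_subset_Icc (by simp [h]) (by exact_mod_cast h))) (cntF_finite _ _)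

lemma affine_inj {A B : ℤ} (hA : 1 < |A|) : Function.Injective (fun x : ℤ => A * x + B) := by
  intro x y h
  simp only [add_left_inj] at h
  exact mul_left_cancel₀ (by intro h0; rw [h0] at hA; simp at hA) h

lemma cnt_upper_rec (F : Set ℤ) {n : ℕ} (a b : Fin n → ℤ) (ha : ∀ i, 1 < |a i|)
    (hcover : F ⊆ ⋃ i, (fun x => a i * x + b i) '' F)
    (B : ℕ) (hB : ∀ i, (b i).natAbs ≤ B) (R : ℕ) :
    cntF F R ≤ ∑ i, cntF F ((R + B) / (a i).natAbs) := by
  classical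
  set q : Fin n → ℕ := fun i => (R + B) / (a i).natAbs with hq
  have hk : ∀ i, 0 < (a i).natAbs := by
    intro i; have := ha i; rw [Int.abs_eq_natAbs] at this; omega
  have hsub : F ∩ Set.Icc (-(R:ℤ)) (R:ℤ) ⊆
      ⋃ i, (fun x => a i * x + b i) '' (F ∩ Set.Icc (-((q i : ℕ):ℤ)) ((q i : ℕ):ℤ)) := by
    rintro x ⟨hxF, hxI⟩
    have := hcover hxF
    rw [Set.mem_iUnion] at this
    obtain ⟨i, y, hyF, hxy⟩ := this
    refine Set.mem_iUnion.mpr ⟨i, y, ⟨hyF, ?_⟩, hxy⟩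
    simp only at hxy
    rw [Set.mem_Icc] at hxI
    have hnm : (a i * y).natAbs = (a i).natAbs * y.natAbs := Int.natAbs_mul _ _
    have hbi := hB i
    have key : (a i).natAbs * y.natAbs ≤ R + B := by omega
    have : y.natAbs ≤ q i := (Nat.le_div_iff_mul_le (hk i)).mpr (by rwa [mul_comm] at key)
    rw [Set.mem_Icc]
    omega
  have hfin : ∀ i : Fin n, ((fun x => a i * x + b i) '' (F ∩ Set.Icc (-((q i : ℕ):ℤ)) ((q i : ℕ):ℤ))).Finite :=
    fun i => ((cntF_finite F (q i)).image _)
  calc cntF F R ≤ (⋃ i, (fun x => a i * x + b i) '' (F ∩ Set.Icc (-((q i : ℕ):ℤ)) ((q i : ℕ):ℤ))).ncard :=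
        Set.ncard_le_ncard hsub (Set.finite_iUnion hfin)
    _ ≤ ∑ i, ((fun x => a i * x + b i) '' (F ∩ Set.Icc (-((q i : ℕ):ℤ)) ((q i : ℕ):ℤ))).ncard := by
        classical
        have h1 : (⋃ i, (fun x : ℤ => a i * x + b i) '' (F ∩ Set.Icc (-((q i : ℕ):ℤ)) ((q i : ℕ):ℤ)))
            = ↑(Finset.univ.biUnion fun i => (hfin i).toFinset) := by
          ext x; simp
        rw [h1, Set.ncard_coe_finset]
        refine (Finset.card_biUnion_le).trans ?_
        apply Finset.sum_le_sum
        intro i _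
        rw [Set.ncard_eq_toFinset_card _ (hfin i)]
    _ = ∑ i, cntF F (q i) := by
        apply Finset.sum_congr rfl
        intro i _
        exact Set.ncard_image_of_injective _ (affine_inj (ha i))

lemma sum_ncard_le' {n : ℕ} (s : Fin n → Set ℤ) (T : Set ℤ) (hT : T.Finite)
    (hsub : ∀ i, s i ⊆ T) (hdisj : Pairwise (Function.onFun Disjoint s)) :
    ∑ i, (s i).ncard ≤ T.ncard := by
  classical
  have hfin : ∀ i, (s i).Finite := fun i => hT.subset (hsub i)
  have h2 : (Finset.univ.biUnion fun i => (hfin i).toFinset) ⊆ hT.toFinset := by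
    intro x hx
    simp only [Finset.mem_biUnion, Set.Finite.mem_toFinset] at hx ⊢
    obtain ⟨i, _, hxi⟩ := hx
    exact hsub i hxi
  have h3 := Finset.card_le_card h2
  rw [Finset.card_biUnion] at h3
  · calc ∑ i, (s i).ncard = ∑ i : Fin n, ((hfin i).toFinset).card := by
          apply Finset.sum_congr rfl; intro i _; rw [Set.ncard_eq_toFinset_card _ (hfin i)]
      _ ≤ hT.toFinset.card := h3
      _ = T.ncard := by rw [Set.ncard_eq_toFinset_card _ hT]
  · intro i _ j _ hij
    have := hdisj hij
    unfold Function.onFun at this ⊢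
    rw [Finset.disjoint_left]
    intro x hx hx'
    rw [Set.Finite.mem_toFinset] at hx hx'
    exact Set.disjoint_left.mp this hx hx'

lemma cnt_lower_rec (F : Set ℤ) {n : ℕ} (a b : Fin n → ℤ) (ha : ∀ i, 1 < |a i|)
    (hss : IsSelfSimilarInt n a b F)
    (B : ℕ) (hB : ∀ i, (b i).natAbs ≤ B) (R : ℕ) (hBR : B ≤ R) :
    ∑ i, cntF F ((R - B) / (a i).natAbs) ≤ cntF F R := by
  classical
  set q : Fin n → ℕ := fun i => (R - B) / (a i).natAbs with hq
  have hk : ∀ i, 0 < (a i).natAbs := by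
    intro i; have := ha i; rw [Int.abs_eq_natAbs] at this; omega
  have himg : ∀ i, (fun x => a i * x + b i) '' F ⊆ F := by
    intro i
    conv_rhs => rw [hss.1]
    exact Set.subset_iUnion (fun i => (fun x => a i * x + b i) '' F) i
  have hsub : ∀ i, (fun x => a i * x + b i) '' (F ∩ Set.Icc (-((q i : ℕ):ℤ)) ((q i : ℕ):ℤ))
      ⊆ F ∩ Set.Icc (-(R:ℤ)) (R:ℤ) := by
    rintro i x ⟨y, ⟨hyF, hyI⟩, hxy⟩
    refine ⟨himg i ⟨y, hyF, hxy⟩, ?_⟩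
    simp only at hxy
    rw [Set.mem_Icc] at hyI ⊢
    have hnm : (a i * y).natAbs = (a i).natAbs * y.natAbs := Int.natAbs_mul _ _
    have hbi := hB i
    have hdm : q i * (a i).natAbs ≤ R - B := Nat.div_mul_le_self _ _
    have hyq : y.natAbs ≤ q i := by omega
    have hmul : (a i).natAbs * y.natAbs ≤ (a i).natAbs * q i :=
      Nat.mul_le_mul_left _ hyq
    have : (a i).natAbs * q i ≤ R - B := by rwa [mul_comm] at hdm
    omega
  have hdisj : Pairwise (Function.onFun Disjoint
      (fun i => (fun x => a i * x + b i) '' (F ∩ Set.Icc (-((q i : ℕ):ℤ)) ((q i : ℕ):ℤ)))) := by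
    intro i j hij
    exact Disjoint.mono (Set.image_mono Set.inter_subset_left)
      (Set.image_mono Set.inter_subset_left) (hss.2 hij)
  have := sum_ncard_le' _ _ (cntF_finite F R) hsub hdisj
  calc ∑ i, cntF F (q i)
      = ∑ i, ((fun x => a i * x + b i) '' (F ∩ Set.Icc (-((q i : ℕ):ℤ)) ((q i : ℕ):ℤ))).ncard := by
        apply Finset.sum_congr rfl
        intro i _
        exact (Set.ncard_image_of_injective _ (affine_inj (ha i))).symm
    _ ≤ cntF F R := this

lemma cnt_upper_bound (F : Set ℤ) {n : ℕ} (hn : 0 < n) (a b : Fin n → ℤ) (ha : ∀ i, 1 < |a i|)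
    (hcover : F ⊆ ⋃ i, (fun x => a i * x + b i) '' F)
    (s : ℝ) (hs : 0 ≤ s) (hbox : ∑ i, ((|a i| : ℝ)) ^ (-s) = 1) :
    ∃ C : ℝ, 0 < C ∧ ∀ R : ℕ, 1 ≤ R → (cntF F R : ℝ) ≤ C * (R:ℝ) ^ s := by
  classical
  obtain ⟨B, hB⟩ : ∃ B : ℕ, ∀ i, (b i).natAbs ≤ B :=
    ⟨Finset.univ.sup (fun i => (b i).natAbs), fun i => Finset.le_sup (f := fun i => (b i).natAbs) (Finset.mem_univ i)⟩
  obtain ⟨A, hAi⟩ : ∃ A : ℕ, ∀ i, (a i).natAbs ≤ A :=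
    ⟨Finset.univ.sup (fun i => (a i).natAbs), fun i => Finset.le_sup (f := fun i => (a i).natAbs) (Finset.mem_univ i)⟩
  have hki : ∀ i, 2 ≤ (a i).natAbs := by
    intro i; have := ha i; rw [Int.abs_eq_natAbs] at this; omega
  have hA2 : 2 ≤ A := by
    obtain ⟨i⟩ := Fin.pos_iff_nonempty.mp hn
    exact le_trans (hki i) (hAi i)
  set R1 : ℕ := (A + 1) * (B + 1) with hR1def
  set C : ℝ := max (cntF F R1 : ℝ) 1 with hCdef
  have hC1 : (1:ℝ) ≤ C := le_max_right _ _
  have hC0 : 0 < C := lt_of_lt_of_le one_pos hC1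
  have habs : ∀ i, |((a i : ℤ) : ℝ)| = ((a i).natAbs : ℝ) := by
    intro i; rw [← Int.cast_abs, Int.abs_eq_natAbs, Int.cast_natCast]
  have main : ∀ R : ℕ, B + 1 ≤ R → (cntF F R : ℝ) ≤ C * ((R:ℝ) - B) ^ s := by
    intro R
    induction R using Nat.strong_induction_on with
    | _ R IH =>
    intro hR
    have hRB1 : (1:ℝ) ≤ (R:ℝ) - B := by
      have : (B:ℝ) + 1 ≤ R := by exact_mod_cast hR
      linarith
    have hRB0 : (0:ℝ) ≤ (R:ℝ) - B := by linarith
    by_cases hR1 : R ≤ R1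
    · have h1 : (cntF F R : ℝ) ≤ C := by
        refine le_trans ?_ (le_max_left _ _)
        exact_mod_cast cntF_mono F hR1
      have h2 : (1:ℝ) ≤ ((R:ℝ) - B) ^ s := Real.one_le_rpow hRB1 hs
      nlinarith
    · push_neg at hR1
      have hrec := cnt_upper_rec F a b ha hcover B hB R
      have hstep : ∀ i : Fin n,
          (cntF F ((R + B) / (a i).natAbs) : ℝ) ≤ C * (((R:ℝ) - B) ^ s * ((a i).natAbs : ℝ) ^ (-s)) := by
        intro i
        set k := (a i).natAbs with hkdef
        set q := (R + B) / k with hqdef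
        have hk2 : 2 ≤ k := hki i
        have hkR : (2:ℝ) ≤ (k:ℝ) := by exact_mod_cast hk2
        have hkpos : (0:ℝ) < k := by linarith
        -- q < R
        have hqlt : q < R := by
          have h1 : q ≤ (R + B) / 2 := Nat.div_le_div_left hk2 (by omega)
          have h2 : (R + B) / 2 < R := by omega
          omega
        -- B + 1 ≤ q
        have hqge : B + 1 ≤ q := by
          rw [hqdef, Nat.le_div_iff_mul_le (by omega : 0 < k)]
          have h1 : (B + 1) * k ≤ (B + 1) * A := Nat.mul_le_mul_left _ (hAi i)
          have h2 : (B + 1) * A ≤ R1 := by rw [hR1def]; ring_nf; omega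
          omega
        have hIH := IH q hqlt hqge
        -- (q:ℝ) - B ≤ ((R:ℝ) - B) / k
        have hqk : (q:ℝ) * k ≤ (R:ℝ) + B := by
          have := Nat.div_mul_le_self (R + B) k
          have h' : q * k ≤ R + B := this
          exact_mod_cast h'
        have hqB : (q:ℝ) - B ≤ ((R:ℝ) - B) / k := by
          rw [le_div_iff₀ hkpos]
          have hB0 : (0:ℝ) ≤ B := by positivity
          nlinarith
        have hq0 : (0:ℝ) ≤ (q:ℝ) - B := by
          have : (B:ℝ) + 1 ≤ q := by exact_mod_cast hqge
          linarith
        have hrpow : ((q:ℝ) - B) ^ s ≤ (((R:ℝ) - B) / k) ^ s :=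
          Real.rpow_le_rpow hq0 hqB hs
        have hdiv : (((R:ℝ) - B) / k) ^ s = ((R:ℝ) - B) ^ s * (k:ℝ) ^ (-s) := by
          rw [Real.div_rpow hRB0 (le_of_lt hkpos), Real.rpow_neg (le_of_lt hkpos), div_eq_mul_inv]
        calc (cntF F q : ℝ) ≤ C * ((q:ℝ) - B) ^ s := hIH
          _ ≤ C * (((R:ℝ) - B) / k) ^ s := by
              apply mul_le_mul_of_nonneg_left hrpow (le_of_lt hC0)
          _ = C * (((R:ℝ) - B) ^ s * (k:ℝ) ^ (-s)) := by rw [hdiv]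
      calc (cntF F R : ℝ) ≤ ∑ i, (cntF F ((R + B) / (a i).natAbs) : ℝ) := by exact_mod_cast hrec
        _ ≤ ∑ i, C * (((R:ℝ) - B) ^ s * ((a i).natAbs : ℝ) ^ (-s)) :=
            Finset.sum_le_sum (fun i _ => hstep i)
        _ = C * ((R:ℝ) - B) ^ s * ∑ i, ((a i).natAbs : ℝ) ^ (-s) := by
            rw [Finset.mul_sum]; apply Finset.sum_congr rfl; intro i _; ring
        _ = C * ((R:ℝ) - B) ^ s := by
            have : ∑ i, ((a i).natAbs : ℝ) ^ (-s) = 1 := by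
              rw [← hbox]; apply Finset.sum_congr rfl; intro i _; rw [habs i]
            rw [this, mul_one]
  refine ⟨C, hC0, ?_⟩
  intro R hR
  have hRs1 : (1:ℝ) ≤ (R:ℝ) ^ s := Real.one_le_rpow (by exact_mod_cast hR) hs
  by_cases hcase : B + 1 ≤ R
  · have h1 := main R hcase
    have h2 : ((R:ℝ) - B) ^ s ≤ (R:ℝ) ^ s := by
      have hc : (B:ℝ) + 1 ≤ R := by exact_mod_cast hcase
      exact Real.rpow_le_rpow (by linarith) (by linarith) hs
    calc (cntF F R : ℝ) ≤ C * ((R:ℝ) - B) ^ s := h1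
      _ ≤ C * (R:ℝ) ^ s := mul_le_mul_of_nonneg_left h2 (le_of_lt hC0)
  · push_neg at hcase
    have h1 : (cntF F R : ℝ) ≤ (cntF F (B+1) : ℝ) := by
      exact_mod_cast cntF_mono F (by omega)
    have h2 := main (B+1) le_rfl
    have h3 : ((B+1:ℕ):ℝ) - B = 1 := by push_cast; ring
    rw [h3, Real.one_rpow, mul_one] at h2
    calc (cntF F R : ℝ) ≤ C := le_trans h1 h2
      _ ≤ C * (R:ℝ) ^ s := by nlinarith

lemma cnt_lower_bound (F : Set ℤ) {n : ℕ} (hn : 0 < n) (a b : Fin n → ℤ) (ha : ∀ i, 1 < |a i|)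
    (hss : IsSelfSimilarInt n a b F) (hne : F.Nonempty)
    (s : ℝ) (hs : 0 ≤ s) (hbox : ∑ i, ((|a i| : ℝ)) ^ (-s) = 1) :
    ∃ c : ℝ, 0 < c ∧ ∃ R0 : ℕ, 1 ≤ R0 ∧ ∀ R : ℕ, R0 ≤ R → c * (R:ℝ) ^ s ≤ (cntF F R : ℝ) := by
  classical
  obtain ⟨B, hB⟩ : ∃ B : ℕ, ∀ i, (b i).natAbs ≤ B :=
    ⟨Finset.univ.sup (fun i => (b i).natAbs), fun i => Finset.le_sup (f := fun i => (b i).natAbs) (Finset.mem_univ i)⟩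
  obtain ⟨A, hAi⟩ : ∃ A : ℕ, ∀ i, (a i).natAbs ≤ A :=
    ⟨Finset.univ.sup (fun i => (a i).natAbs), fun i => Finset.le_sup (f := fun i => (a i).natAbs) (Finset.mem_univ i)⟩
  have hki : ∀ i, 2 ≤ (a i).natAbs := by
    intro i; have := ha i; rw [Int.abs_eq_natAbs] at this; omega
  have hA2 : 2 ≤ A := by
    obtain ⟨i⟩ := Fin.pos_iff_nonempty.mp hn
    exact le_trans (hki i) (hAi i)
  have habs : ∀ i, |((a i : ℤ) : ℝ)| = ((a i).natAbs : ℝ) := by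
    intro i; rw [← Int.cast_abs, Int.abs_eq_natAbs, Int.cast_natCast]
  obtain ⟨x0, hx0⟩ := hne
  obtain ⟨R0, hR0def⟩ : ∃ R0 : ℕ, R0 = x0.natAbs + 1 := ⟨_, rfl⟩
  obtain ⟨K, hKdef⟩ : ∃ K : ℕ, K = A + B := ⟨_, rfl⟩
  obtain ⟨R2, hR2def⟩ : ∃ R2 : ℕ, R2 = A * R0 + B + 1 := ⟨_, rfl⟩
  have hcnt1 : ∀ R : ℕ, R0 ≤ R → 1 ≤ cntF F R := by
    intro R hR
    have hx0m : x0 ∈ F ∩ Set.Icc (-(R:ℤ)) (R:ℤ) := by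
      refine ⟨hx0, ?_⟩
      rw [Set.mem_Icc]
      omega
    exact (Set.ncard_pos (cntF_finite F R)).mpr ⟨x0, hx0m⟩
  obtain ⟨c, hcdef⟩ : ∃ c : ℝ, c = (((R2 + K : ℕ) : ℝ) ^ s)⁻¹ := ⟨_, rfl⟩
  have hRKpos : (0:ℝ) < ((R2 + K : ℕ) : ℝ) := by
    have h : 0 < R2 + K := by omega
    exact_mod_cast h
  have hc0 : 0 < c := by
    rw [hcdef]
    exact inv_pos.mpr (Real.rpow_pos_of_pos hRKpos s)
  have main : ∀ R : ℕ, R0 ≤ R → c * ((R:ℝ) + K) ^ s ≤ (cntF F R : ℝ) := by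
    intro R
    induction R using Nat.strong_induction_on with
    | _ R IH =>
    intro hR
    have hR1 : 1 ≤ R := by omega
    by_cases hcase : R ≤ R2
    · have h1 : c * ((R:ℝ) + K) ^ s ≤ 1 := by
        rw [hcdef]
        rw [inv_mul_le_iff₀ (Real.rpow_pos_of_pos hRKpos s), mul_one]
        apply Real.rpow_le_rpow (by positivity) ?_ hs
        push_cast
        have : (R:ℝ) ≤ R2 := by exact_mod_cast hcase
        linarith
      have h2 : (1:ℝ) ≤ (cntF F R : ℝ) := by exact_mod_cast hcnt1 R hR
      linarith
    · push_neg at hcase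
      have hBR : B ≤ R := by omega
      have hrec := cnt_lower_rec F a b ha hss B hB R hBR
      have hstep : ∀ i : Fin n,
          c * (((R:ℝ) + K) ^ s * ((a i).natAbs : ℝ) ^ (-s)) ≤ (cntF F ((R - B) / (a i).natAbs) : ℝ) := by
        intro i
        set k := (a i).natAbs with hkdef
        set q := (R - B) / k with hqdef
        have hk2 : 2 ≤ k := hki i
        have hkA : k ≤ A := hAi i
        have hkR : (2:ℝ) ≤ (k:ℝ) := by exact_mod_cast hk2
        have hkpos : (0:ℝ) < k := by linarith
        have hkAR : (k:ℝ) ≤ (A:ℝ) := by exact_mod_cast hkA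
        -- q < R
        have hqlt : q < R := by
          have h1 : q ≤ R / k := Nat.div_le_div_right (by omega)
          have h2 : R / k < R := Nat.div_lt_self (by omega) (by omega)
          omega
        -- R0 ≤ q
        have hqge : R0 ≤ q := by
          rw [hqdef, Nat.le_div_iff_mul_le (by omega : 0 < k)]
          have h1 : R0 * k ≤ R0 * A := Nat.mul_le_mul_left _ hkA
          have h2 : A * R0 + B + 1 < R := by omega
          have h3 : R0 * A = A * R0 := Nat.mul_comm _ _
          omega
        have hIH := IH q hqlt hqge
        -- ((R:ℝ) + K) / k ≤ (q:ℝ) + K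
        have hqk : (R:ℝ) - B < (q:ℝ) * k + k := by
          have hdm : k * q + (R - B) % k = R - B := Nat.div_add_mod (R - B) k
          have hmod : (R - B) % k < k := Nat.mod_lt _ (by omega)
          have h1 : R - B < q * k + k := by
            have hcm : k * q = q * k := Nat.mul_comm _ _
            omega
          have h2 : ((R - B : ℕ) : ℝ) = (R:ℝ) - B := by
            push_cast [hBR]; ring
          rw [← h2]
          have h3 : ((R - B : ℕ) : ℝ) < ((q * k + k : ℕ) : ℝ) := by exact_mod_cast h1
          push_cast at h3
          exact h3
        have hqB : ((R:ℝ) + K) / k ≤ (q:ℝ) + K := by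
          rw [div_le_iff₀ hkpos]
          have hBR' : (0:ℝ) ≤ (B:ℝ) := by positivity
          have hKval : (K:ℝ) = (A:ℝ) + B := by rw [hKdef]; push_cast; ring
          nlinarith [hqk, hkR, hkAR, hBR', hKval]
        have hq0 : (0:ℝ) ≤ ((R:ℝ) + K) / k := by positivity
        have hrpow : (((R:ℝ) + K) / k) ^ s ≤ ((q:ℝ) + K) ^ s :=
          Real.rpow_le_rpow hq0 hqB hs
        have hdiv : (((R:ℝ) + K) / k) ^ s = ((R:ℝ) + K) ^ s * (k:ℝ) ^ (-s) := by
          rw [Real.div_rpow (by positivity) (le_of_lt hkpos), Real.rpow_neg (le_of_lt hkpos), div_eq_mul_inv]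
        calc c * (((R:ℝ) + K) ^ s * ((a i).natAbs : ℝ) ^ (-s))
            = c * ((((R:ℝ) + K) / k) ^ s) := by rw [hdiv]
          _ ≤ c * (((q:ℝ) + K) ^ s) := mul_le_mul_of_nonneg_left hrpow (le_of_lt hc0)
          _ ≤ (cntF F q : ℝ) := hIH
      calc c * ((R:ℝ) + K) ^ s
          = c * ((R:ℝ) + K) ^ s * ∑ i, ((a i).natAbs : ℝ) ^ (-s) := by
            have : ∑ i, ((a i).natAbs : ℝ) ^ (-s) = 1 := by
              rw [← hbox]; apply Finset.sum_congr rfl; intro i _; rw [habs i]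
            rw [this, mul_one]
        _ = ∑ i, c * (((R:ℝ) + K) ^ s * ((a i).natAbs : ℝ) ^ (-s)) := by
            rw [Finset.mul_sum]; apply Finset.sum_congr rfl; intro i _; ring
        _ ≤ ∑ i, (cntF F ((R - B) / (a i).natAbs) : ℝ) :=
            Finset.sum_le_sum (fun i _ => hstep i)
        _ ≤ (cntF F R : ℝ) := by exact_mod_cast hrec
  refine ⟨c, hc0, R0, by omega, ?_⟩
  intro R hR
  have h1 := main R hR
  have h2 : (R:ℝ) ^ s ≤ ((R:ℝ) + K) ^ s := by
    have hK0 : (0:ℝ) ≤ (K:ℝ) := by positivity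
    exact Real.rpow_le_rpow (by positivity) (by linarith) hs
  calc c * (R:ℝ) ^ s ≤ c * ((R:ℝ) + K) ^ s := mul_le_mul_of_nonneg_left h2 (le_of_lt hc0)
    _ ≤ (cntF F R : ℝ) := h1

lemma exp_le_of_bounds {cl Cu s t : ℝ} (hcl : 0 < cl) (R0 : ℕ)
    (h : ∀ R : ℕ, R0 ≤ R → cl * (R:ℝ) ^ s ≤ Cu * (R:ℝ) ^ t) : s ≤ t := by
  by_contra hlt
  push_neg at hlt
  have hpos : 0 < s - t := by linarith
  have htends : Filter.Tendsto (fun R : ℕ => (R:ℝ) ^ (s - t)) Filter.atTop Filter.atTop :=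
    (tendsto_rpow_atTop hpos).comp tendsto_natCast_atTop_atTop
  obtain ⟨R1, hR1⟩ := (htends.eventually_ge_atTop (Cu / cl + 1)).exists_forall_of_atTop
  set R := max (max R0 R1) 1 with hRdef
  have hRge : R0 ≤ R := le_trans (le_max_left _ _) (le_max_left _ _)
  have hR1ge : R1 ≤ R := le_trans (le_max_right _ _) (le_max_left _ _)
  have hRpos : (0:ℝ) < (R:ℝ) := by
    have : 1 ≤ R := le_max_right _ _
    exact_mod_cast this
  have hbig := hR1 R hR1ge
  have hle := h R hRge
  have hsplit : (R:ℝ) ^ s = (R:ℝ) ^ t * (R:ℝ) ^ (s - t) := by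
    rw [← Real.rpow_add hRpos]; ring_nf
  rw [hsplit] at hle
  have hRt : (0:ℝ) < (R:ℝ) ^ t := Real.rpow_pos_of_pos hRpos t
  -- cl * (R^t * R^(s-t)) ≤ Cu * R^t and R^(s-t) ≥ Cu/cl + 1
  have hcontra : cl * ((R:ℝ) ^ t * (R:ℝ) ^ (s - t)) ≥ cl * ((R:ℝ) ^ t * (Cu / cl + 1)) := by
    apply mul_le_mul_of_nonneg_left ?_ (le_of_lt hcl)
    exact mul_le_mul_of_nonneg_left hbig (le_of_lt hRt)
  have hexp : cl * ((R:ℝ) ^ t * (Cu / cl + 1)) = Cu * (R:ℝ) ^ t + cl * (R:ℝ) ^ t := by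
    field_simp
  nlinarith

/-- (Mahdavifar–Naghshineh) The fractal dimension of an infinite self-similar
subset of `ℤ` does not depend on the choice of similarity maps. -/
theorem fractalDim_wellDefined
    (F : Set ℤ) (hF : F.Infinite)
    (n : ℕ) (a b : Fin n → ℤ) (ha : ∀ i, 1 < |a i|)
    (hss₁ : IsSelfSimilarInt n a b F)
    (m : ℕ) (c d : Fin m → ℤ) (hc : ∀ j, 1 < |c j|)
    (hss₂ : IsSelfSimilarInt m c d F)
    (s : ℝ) (hs : 0 ≤ s) (hbox₁ : ∑ i, ((|a i| : ℝ)) ^ (-s) = 1)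
    (t : ℝ) (ht : 0 ≤ t) (hbox₂ : ∑ j, ((|c j| : ℝ)) ^ (-t) = 1) :
    s = t := by
  have hne : F.Nonempty := hF.nonempty
  have hn : 0 < n := by
    rcases Nat.eq_zero_or_pos n with h | h
    · subst h; simp at hbox₁
    · exact h
  have hm : 0 < m := by
    rcases Nat.eq_zero_or_pos m with h | h
    · subst h; simp at hbox₂
    · exact h
  have hcov₁ : F ⊆ ⋃ i, (fun x => a i * x + b i) '' F := le_of_eq hss₁.1
  have hcov₂ : F ⊆ ⋃ j, (fun x => c j * x + d j) '' F := le_of_eq hss₂.1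
  obtain ⟨C₁, hC₁0, hC₁⟩ := cnt_upper_bound F hn a b ha hcov₁ s hs hbox₁
  obtain ⟨C₂, hC₂0, hC₂⟩ := cnt_upper_bound F hm c d hc hcov₂ t ht hbox₂
  obtain ⟨c₁, hc₁0, R₁, hR₁1, hc₁⟩ := cnt_lower_bound F hn a b ha hss₁ hne s hs hbox₁
  obtain ⟨c₂, hc₂0, R₂, hR₂1, hc₂⟩ := cnt_lower_bound F hm c d hc hss₂ hne t ht hbox₂
  have hst : s ≤ t := by
    apply exp_le_of_bounds hc₁0 R₁
    intro R hR
    exact le_trans (hc₁ R hR) (hC₂ R (by omega))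
  have hts : t ≤ s := by
    apply exp_le_of_bounds hc₂0 R₂
    intro R hR
    exact le_trans (hc₂ R hR) (hC₁ R (by omega))
  linarith
end

section
/- (Mahdavifar–Naghshineh, monotonicity of fractal dimension in $\mathbb{Z}$.) Let $F_1 \subseteq F_2 \subseteq \mathbb{Z}$ be infinite sets such that $F_1$ is self-similar with respect to affine maps $\varphi_i(x) = a_i x + b_i$ for $i = 1, \dots, n$ (with $a_i, b_i \in \mathbb{Z}$, $|a_i| > 1$) and $F_2$ is self-similar with respect to affine maps $\psi_j(x) = c_j x + d_j$ for $j = 1, \dots, m$ (with $c_j, d_j \in \mathbb{Z}$, $|c_j| > 1$). If $s_1 \ge 0$ satisfies $\sum_{i=1}^n |a_i|^{-s_1} = 1$ and $s_2 \ge 0$ satisfies $\sum_{j=1}^m |c_j|^{-s_2} = 1$, then $s_1 \le s_2$; that is, $\dim(F_1) \le \dim(F_2)$. -/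
open Set

noncomputable def icnt (F : Set ℤ) (R : ℝ) : ℕ := {x : ℤ | x ∈ F ∧ |(x : ℝ)| ≤ R}.ncard

lemma icnt_finite (F : Set ℤ) (R : ℝ) : {x : ℤ | x ∈ F ∧ |(x : ℝ)| ≤ R}.Finite := by
  apply (Set.finite_Icc (-⌈R⌉) ⌈R⌉).subset
  rintro x ⟨-, hx⟩
  have h1 : (|x| : ℝ) ≤ (⌈R⌉ : ℝ) := by
    push_cast
    exact hx.trans (Int.le_ceil R)
  have h2 : |x| ≤ ⌈R⌉ := by exact_mod_cast h1
  simpa [Set.mem_Icc] using abs_le.mp h2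

lemma icnt_mono (F : Set ℤ) {R R' : ℝ} (h : R ≤ R') : icnt F R ≤ icnt F R' :=
  Set.ncard_le_ncard (fun x hx => ⟨hx.1, hx.2.trans h⟩) (icnt_finite F R')

lemma icnt_subset (F G : Set ℤ) (h : F ⊆ G) (R : ℝ) : icnt F R ≤ icnt G R :=
  Set.ncard_le_ncard (fun x hx => ⟨h hx.1, hx.2⟩) (icnt_finite G R)

lemma icnt_one_le {F : Set ℤ} {x : ℤ} (hx : x ∈ F) {R : ℝ} (hR : |(x:ℝ)| ≤ R) :
    1 ≤ icnt F R := by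
  have := (Set.ncard_pos (icnt_finite F R)).mpr ⟨x, hx, hR⟩
  exact this

lemma icnt_lower {n : ℕ} {a b : Fin n → ℤ} {F : Set ℤ}
    (ha : ∀ i, a i ≠ 0) (hss : IsSelfSimilarInt n a b F)
    (R : ℝ) (r : Fin n → ℝ) (hr : ∀ i, (|a i| : ℝ) * r i + (|b i| : ℝ) ≤ R) :
    ∑ i, icnt F (r i) ≤ icnt F R := by
  classical
  set T : Fin n → Set ℤ := fun i => (fun x => a i * x + b i) '' {x : ℤ | x ∈ F ∧ |(x : ℝ)| ≤ r i}
    with hT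
  have hinj : ∀ i, Function.Injective (fun x : ℤ => a i * x + b i) := by
    intro i x y h
    simp only [add_left_inj] at h
    exact mul_left_cancel₀ (ha i) h
  have hTfin : ∀ i, (T i).Finite := fun i => (icnt_finite F (r i)).image _
  have hTsub : ∀ i, T i ⊆ {x : ℤ | x ∈ F ∧ |(x : ℝ)| ≤ R} := by
    rintro i _ ⟨x, ⟨hxF, hxr⟩, rfl⟩
    constructor
    · rw [hss.1]
      exact Set.mem_iUnion.mpr ⟨i, ⟨x, hxF, rfl⟩⟩
    · have h1 : |((a i * x + b i : ℤ) : ℝ)| ≤ (|a i| : ℝ) * |(x : ℝ)| + (|b i| : ℝ) := by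
        push_cast
        exact (abs_add_le _ _).trans (by rw [abs_mul])
      have h2 : (|a i| : ℝ) * |(x : ℝ)| ≤ (|a i| : ℝ) * r i := by
        apply mul_le_mul_of_nonneg_left hxr
        positivity
      exact h1.trans (by linarith [hr i])
  -- to finsets
  have hcard : ∀ i, icnt F (r i) = ((hTfin i).toFinset).card := by
    intro i
    rw [← Set.ncard_eq_toFinset_card _ (hTfin i)]
    exact (Set.ncard_image_of_injective _ (hinj i)).symm
  calc ∑ i, icnt F (r i) = ∑ i, ((hTfin i).toFinset).card := by simp [hcard]
    _ = (Finset.univ.biUnion fun i => (hTfin i).toFinset).card := by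
        rw [Finset.card_biUnion]
        intro i _ j _ hij
        have := hss.2 hij
        simp only [Finset.disjoint_left, Set.Finite.mem_toFinset]
        intro x hx1 hx2
        have h1 : x ∈ (fun x => a i * x + b i) '' F := by
          obtain ⟨y, hy, rfl⟩ := hx1; exact ⟨y, hy.1, rfl⟩
        have h2 : x ∈ (fun x => a j * x + b j) '' F := by
          obtain ⟨y, hy, rfl⟩ := hx2; exact ⟨y, hy.1, rfl⟩
        exact (this.le_bot ⟨h1, h2⟩)
    _ ≤ icnt F R := by
        rw [icnt, Set.ncard_eq_toFinset_card _ (icnt_finite F R)]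
        apply Finset.card_le_card
        intro x hx
        simp only [Finset.mem_biUnion, Set.Finite.mem_toFinset] at hx ⊢
        obtain ⟨i, _, hxi⟩ := hx
        exact hTsub i hxi

lemma icnt_upper {m : ℕ} {c d : Fin m → ℤ} {F : Set ℤ}
    (hc : ∀ j, 0 < |c j|) (hss : IsSelfSimilarInt m c d F)
    (R : ℝ) (r : Fin m → ℝ) (hr : ∀ j, R + (|d j| : ℝ) ≤ (|c j| : ℝ) * r j) :
    icnt F R ≤ ∑ j, icnt F (r j) := by
  classical
  set T : Fin m → Set ℤ := fun j => (fun x => c j * x + d j) '' {x : ℤ | x ∈ F ∧ |(x : ℝ)| ≤ r j}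
    with hT
  have hinj : ∀ j, Function.Injective (fun x : ℤ => c j * x + d j) := by
    intro j x y h
    simp only [add_left_inj] at h
    exact mul_left_cancel₀ (abs_pos.mp (hc j)) h
  have hTfin : ∀ j, (T j).Finite := fun j => (icnt_finite F (r j)).image _
  have hsub : {x : ℤ | x ∈ F ∧ |(x : ℝ)| ≤ R} ⊆ ⋃ j, T j := by
    rintro x ⟨hxF, hxR⟩
    have : x ∈ ⋃ j, (fun y => c j * y + d j) '' F := by rw [← hss.1]; exact hxF
    obtain ⟨j, y, hyF, hxy⟩ := Set.mem_iUnion.mp this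
    refine Set.mem_iUnion.mpr ⟨j, ⟨y, ⟨hyF, ?_⟩, hxy⟩⟩
    -- |y| ≤ r j
    have hcj : (0:ℝ) < (|c j| : ℝ) := by exact_mod_cast hc j
    rw [← hxy] at hxR
    have h1 : (|c j| : ℝ) * |(y : ℝ)| ≤ R + (|d j| : ℝ) := by
      have key := abs_add_le ((c j : ℝ) * (y : ℝ) + (d j : ℝ)) (-(d j : ℝ))
      simp only [add_neg_cancel_right, abs_neg] at key
      push_cast at hxR ⊢
      rw [← abs_mul]
      linarith
    have := hr j
    nlinarith
  calc icnt F R ≤ (⋃ j, T j).ncard := by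
        exact Set.ncard_le_ncard hsub (Set.finite_iUnion hTfin)
    _ ≤ ∑ j, (T j).ncard := by
        rw [Set.ncard_eq_toFinset_card _ (Set.finite_iUnion hTfin)]
        have : (Set.finite_iUnion hTfin).toFinset ⊆ Finset.univ.biUnion fun j => (hTfin j).toFinset := by
          intro x hx
          simp only [Set.Finite.mem_toFinset, Set.mem_iUnion] at hx
          obtain ⟨j, hj⟩ := hx
          simp only [Finset.mem_biUnion, Set.Finite.mem_toFinset]
          exact ⟨j, Finset.mem_univ j, hj⟩
        refine (Finset.card_le_card this).trans ?_
        refine (Finset.card_biUnion_le).trans ?_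
        apply Finset.sum_le_sum
        intro j _
        rw [← Set.ncard_eq_toFinset_card _ (hTfin j)]
    _ = ∑ j, icnt F (r j) := by
        apply Finset.sum_congr rfl
        intro j _
        exact Set.ncard_image_of_injective _ (hinj j)

lemma growth_lower {n : ℕ} {a b : Fin n → ℤ} {F : Set ℤ}
    (ha : ∀ i, 1 < |a i|) (hss : IsSelfSimilarInt n a b F)
    {x₀ : ℤ} (hx₀ : x₀ ∈ F)
    {s₁ : ℝ} (hs₁ : 0 ≤ s₁) (hbox : ∑ i, ((|a i| : ℝ)) ^ (-s₁) = 1) :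
    ∃ R₀ cl : ℝ, 0 < cl ∧ 2 ≤ R₀ ∧ ∀ R, R₀ ≤ R → cl * R ^ s₁ ≤ (icnt F R : ℝ) := by
  have hn : n ≠ 0 := by
    rintro rfl
    simp at hbox
  obtain ⟨i₀⟩ : Nonempty (Fin n) := ⟨⟨0, Nat.pos_of_ne_zero hn⟩⟩
  set B : ℝ := ∑ i, (|b i| : ℝ) with hB
  set A : ℝ := ∑ i, (|a i| : ℝ) with hA
  have hBnn : 0 ≤ B := Finset.sum_nonneg fun i _ => by positivity
  have haR : ∀ i, (2:ℝ) ≤ (|a i| : ℝ) := by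
    intro i; exact_mod_cast ha i
  have hbB : ∀ i, (|b i| : ℝ) ≤ B :=
    fun i => Finset.single_le_sum (f := fun i => ((|b i| : ℝ))) (fun i _ => by positivity)
      (Finset.mem_univ i)
  have haA : ∀ i, (|a i| : ℝ) ≤ A :=
    fun i => Finset.single_le_sum (f := fun i => ((|a i| : ℝ))) (fun i _ => by positivity)
      (Finset.mem_univ i)
  have hA2 : (2:ℝ) ≤ A := (haR i₀).trans (haA i₀)
  set R₀ : ℝ := |(x₀ : ℝ)| + 2 with hR₀
  have hR₀2 : (2:ℝ) ≤ R₀ := by have := abs_nonneg ((x₀:ℝ)); rw [hR₀]; linarith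
  set T₁ : ℝ := A * R₀ + B with hT₁
  have hT₁R₀ : R₀ ≤ T₁ := by nlinarith
  have hTB : (0:ℝ) < T₁ + B := by nlinarith
  set cl : ℝ := ((T₁ + B) ^ s₁)⁻¹ with hcl
  have hclpos : 0 < cl := by
    rw [hcl]
    exact inv_pos.mpr (Real.rpow_pos_of_pos hTB _)
  refine ⟨R₀, cl, hclpos, hR₀2, ?_⟩
  have hbase : ∀ R : ℝ, R₀ ≤ R → R ≤ T₁ → cl * (R + B) ^ s₁ ≤ (icnt F R : ℝ) := by
    intro R hR1 hR2
    have h1 : cl * (R + B) ^ s₁ ≤ cl * (T₁ + B) ^ s₁ := by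
      apply mul_le_mul_of_nonneg_left _ hclpos.le
      exact Real.rpow_le_rpow (by nlinarith) (by linarith) hs₁
    have h2 : cl * (T₁ + B) ^ s₁ = 1 := inv_mul_cancel₀ (Real.rpow_pos_of_pos hTB _).ne'
    have h3 : 1 ≤ icnt F R := icnt_one_le hx₀ (by rw [hR₀] at hR1; linarith)
    have h4 : (1:ℝ) ≤ (icnt F R : ℝ) := by exact_mod_cast h3
    linarith
  have key : ∀ k : ℕ, ∀ R : ℝ, R₀ ≤ R → R ≤ R₀ + k → cl * (R + B) ^ s₁ ≤ (icnt F R : ℝ) := by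
    intro k
    induction k with
    | zero => intro R hR1 hR2
              exact hbase R hR1 (by push_cast at hR2; linarith)
    | succ k IH =>
        intro R hR1 hR2
        by_cases hcase : R ≤ T₁
        · exact hbase R hR1 hcase
        push_neg at hcase
        set r : Fin n → ℝ := fun i => (R - B) / (|a i| : ℝ) with hr
        have hai_pos : ∀ i, (0:ℝ) < (|a i| : ℝ) := fun i => by linarith [haR i]
        have hsum := icnt_lower (fun i => abs_pos.mp (zero_lt_one.trans (ha i))) hss R r ?_
        swap
        · intro i
          rw [hr]
          have : (|a i| : ℝ) * ((R - B) / (|a i| : ℝ)) = R - B := by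
            rw [mul_comm]; exact div_mul_cancel₀ _ (ne_of_gt (hai_pos i))
          rw [this]
          linarith [hbB i]
        have hRB : 0 < R - B := by nlinarith
        have hri_lb : ∀ i, R₀ ≤ r i := by
          intro i
          rw [hr]
          have h5 : (R - B) / A ≤ (R - B) / (|a i| : ℝ) :=
            div_le_div_of_nonneg_left hRB.le (hai_pos i) (haA i)
          have h6 : R₀ ≤ (R - B) / A := by
            rw [le_div_iff₀ (by linarith)]
            nlinarith
          linarith
        have hri_ub : ∀ i, r i ≤ R₀ + k := by
          intro i
          rw [hr]
          have h5 : (R - B) / (|a i| : ℝ) ≤ (R - B) / 2 :=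
            div_le_div_of_nonneg_left hRB.le two_pos (haR i)
          have h6 : (R - B) / 2 ≤ R - 1 := by nlinarith
          push_cast at hR2
          linarith
        have hstep : ∀ i, cl * ((R + B) ^ s₁ * ((|a i| : ℝ)) ^ (-s₁)) ≤ (icnt F (r i) : ℝ) := by
          intro i
          refine le_trans ?_ (IH (r i) (hri_lb i) (hri_ub i))
          apply mul_le_mul_of_nonneg_left _ hclpos.le
          have h7 : (R + B) / (|a i| : ℝ) ≤ r i + B := by
            rw [hr, div_le_iff₀ (hai_pos i)]
            have := haR i
            have h8 : (R - B) / (|a i| : ℝ) * (|a i| : ℝ) = R - B := by field_simp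
            rw [add_mul, h8]
            nlinarith
          have hRBnn : (0:ℝ) ≤ R + B := by linarith
          have h9 : ((R + B) / (|a i| : ℝ)) ^ s₁ ≤ (r i + B) ^ s₁ :=
            Real.rpow_le_rpow (div_nonneg hRBnn (hai_pos i).le) h7 hs₁
          refine le_trans (le_of_eq ?_) h9
          rw [Real.div_rpow hRBnn (hai_pos i).le, Real.rpow_neg (hai_pos i).le,
            div_eq_mul_inv]
        calc cl * (R + B) ^ s₁ = ∑ i, cl * ((R + B) ^ s₁ * ((|a i| : ℝ)) ^ (-s₁)) := by
              rw [← Finset.mul_sum, ← Finset.mul_sum, hbox, mul_one]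
          _ ≤ ∑ i, (icnt F (r i) : ℝ) := Finset.sum_le_sum fun i _ => hstep i
          _ = ((∑ i, icnt F (r i) : ℕ) : ℝ) := by push_cast; ring
          _ ≤ (icnt F R : ℝ) := by exact_mod_cast hsum
  intro R hR
  have h1 := key ⌈R - R₀⌉₊ R hR (by linarith [Nat.le_ceil (R - R₀)])
  have h2 : cl * R ^ s₁ ≤ cl * (R + B) ^ s₁ := by
    apply mul_le_mul_of_nonneg_left _ hclpos.le
    exact Real.rpow_le_rpow (by linarith) (by linarith) hs₁
  linarith

lemma growth_upper {m : ℕ} {c d : Fin m → ℤ} {F : Set ℤ}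
    (hc : ∀ j, 1 < |c j|) (hss : IsSelfSimilarInt m c d F)
    {s₂ : ℝ} (hs₂ : 0 ≤ s₂) (hbox : ∑ j, ((|c j| : ℝ)) ^ (-s₂) = 1) :
    ∃ R₀ C : ℝ, 2 ≤ R₀ ∧ 0 ≤ C ∧ ∀ R, R₀ ≤ R → (icnt F R : ℝ) ≤ C * R ^ s₂ := by
  have hm : m ≠ 0 := by
    rintro rfl
    simp at hbox
  obtain ⟨j₀⟩ : Nonempty (Fin m) := ⟨⟨0, Nat.pos_of_ne_zero hm⟩⟩
  set D : ℝ := ∑ j, (|d j| : ℝ) with hD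
  set A : ℝ := ∑ j, (|c j| : ℝ) with hA
  have hDnn : 0 ≤ D := Finset.sum_nonneg fun j _ => by positivity
  have hcR : ∀ j, (2:ℝ) ≤ (|c j| : ℝ) := by
    intro j; exact_mod_cast hc j
  have hcj_pos : ∀ j, (0:ℝ) < (|c j| : ℝ) := fun j => by linarith [hcR j]
  have hdD : ∀ j, (|d j| : ℝ) ≤ D :=
    fun j => Finset.single_le_sum (f := fun j => ((|d j| : ℝ))) (fun j _ => by positivity)
      (Finset.mem_univ j)
  have hcA : ∀ j, (|c j| : ℝ) ≤ A :=
    fun j => Finset.single_le_sum (f := fun j => ((|c j| : ℝ))) (fun j _ => by positivity)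
      (Finset.mem_univ j)
  have hA2 : (2:ℝ) ≤ A := (hcR j₀).trans (hcA j₀)
  set R₀ : ℝ := D + 2 with hR₀
  have hR₀2 : (2:ℝ) ≤ R₀ := by linarith
  set T₂ : ℝ := A * (R₀ + D) with hT₂
  have hT₂R₀ : R₀ ≤ T₂ := by nlinarith
  set C : ℝ := (icnt F T₂ : ℝ) with hC
  have hCnn : 0 ≤ C := by positivity
  refine ⟨R₀, C, hR₀2, hCnn, ?_⟩
  have hbase : ∀ R : ℝ, R₀ ≤ R → R ≤ T₂ → (icnt F R : ℝ) ≤ C * (R - D) ^ s₂ := by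
    intro R hR1 hR2
    have h1 : (icnt F R : ℝ) ≤ C := by
      rw [hC]
      exact_mod_cast icnt_mono F hR2
    have h2 : (1:ℝ) ≤ (R - D) ^ s₂ := Real.one_le_rpow (by rw [hR₀] at hR1; linarith) hs₂
    nlinarith
  have key : ∀ k : ℕ, ∀ R : ℝ, R₀ ≤ R → R ≤ R₀ + k → (icnt F R : ℝ) ≤ C * (R - D) ^ s₂ := by
    intro k
    induction k with
    | zero => intro R hR1 hR2
              exact hbase R hR1 (by push_cast at hR2; linarith)
    | succ k IH =>
        intro R hR1 hR2
        by_cases hcase : R ≤ T₂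
        · exact hbase R hR1 hcase
        push_neg at hcase
        set r : Fin m → ℝ := fun j => (R + D) / (|c j| : ℝ) with hr
        have hcancel : ∀ j, (|c j| : ℝ) * ((R + D) / (|c j| : ℝ)) = R + D := by
          intro j
          rw [mul_comm]; exact div_mul_cancel₀ _ (ne_of_gt (hcj_pos j))
        have hsum := icnt_upper (fun j => abs_pos.mpr (abs_pos.mp (zero_lt_one.trans (hc j))))
          hss R r ?_
        swap
        · intro j
          rw [hr]
          simp only
          rw [hcancel j]
          linarith [hdD j]
        have hrj_lb : ∀ j, R₀ + D ≤ r j := by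
          intro j
          rw [hr]
          have h5 : (R + D) / A ≤ (R + D) / (|c j| : ℝ) :=
            div_le_div_of_nonneg_left (by nlinarith) (hcj_pos j) (hcA j)
          have h6 : R₀ + D ≤ (R + D) / A := by
            rw [le_div_iff₀ (by linarith)]
            nlinarith
          linarith
        have hrj_ub : ∀ j, r j ≤ R₀ + k := by
          intro j
          rw [hr]
          have h5 : (R + D) / (|c j| : ℝ) ≤ (R + D) / 2 :=
            div_le_div_of_nonneg_left (by nlinarith) two_pos (hcR j)
          have h6 : (R + D) / 2 ≤ R - 1 := by rw [hR₀] at hR1; nlinarith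
          push_cast at hR2
          linarith
        have hstep : ∀ j, (icnt F (r j) : ℝ) ≤ C * ((R - D) ^ s₂ * ((|c j| : ℝ)) ^ (-s₂)) := by
          intro j
          refine le_trans (IH (r j) (by linarith [hrj_lb j]) (hrj_ub j)) ?_
          apply mul_le_mul_of_nonneg_left _ hCnn
          have h7 : r j - D ≤ (R - D) / (|c j| : ℝ) := by
            rw [le_div_iff₀ (hcj_pos j), sub_mul, hr]
            simp only
            rw [div_mul_cancel₀ _ (ne_of_gt (hcj_pos j))]
            have := hcR j
            nlinarith
          have h8 : (0:ℝ) ≤ r j - D := by linarith [hrj_lb j, hR₀2]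
          have h9 : (r j - D) ^ s₂ ≤ ((R - D) / (|c j| : ℝ)) ^ s₂ :=
            Real.rpow_le_rpow h8 h7 hs₂
          refine h9.trans (le_of_eq ?_)
          have hRDnn : (0:ℝ) ≤ R - D := by rw [hR₀] at hR1; linarith
          rw [Real.div_rpow hRDnn (hcj_pos j).le, Real.rpow_neg (hcj_pos j).le,
            div_eq_mul_inv]
        calc (icnt F R : ℝ) ≤ ((∑ j, icnt F (r j) : ℕ) : ℝ) := by exact_mod_cast hsum
          _ = ∑ j, (icnt F (r j) : ℝ) := by push_cast; ring
          _ ≤ ∑ j, C * ((R - D) ^ s₂ * ((|c j| : ℝ)) ^ (-s₂)) :=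
              Finset.sum_le_sum fun j _ => hstep j
          _ = C * (R - D) ^ s₂ := by
              rw [← Finset.mul_sum, ← Finset.mul_sum, hbox, mul_one]
  intro R hR
  have h1 := key ⌈R - R₀⌉₊ R hR (by linarith [Nat.le_ceil (R - R₀)])
  have h2 : C * (R - D) ^ s₂ ≤ C * R ^ s₂ := by
    apply mul_le_mul_of_nonneg_left _ hCnn
    exact Real.rpow_le_rpow (by rw [hR₀] at hR; linarith) (by linarith) hs₂
  linarith

/-- (Mahdavifar–Naghshineh) Monotonicity of fractal dimension for nested infinite
self-similar subsets of `ℤ`. -/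
theorem fractalDim_mono
    (F₁ F₂ : Set ℤ) (hsub : F₁ ⊆ F₂) (hF₁ : F₁.Infinite) (hF₂ : F₂.Infinite)
    (n : ℕ) (a b : Fin n → ℤ) (ha : ∀ i, 1 < |a i|)
    (hss₁ : IsSelfSimilarInt n a b F₁)
    (m : ℕ) (c d : Fin m → ℤ) (hc : ∀ j, 1 < |c j|)
    (hss₂ : IsSelfSimilarInt m c d F₂)
    (s₁ : ℝ) (hs₁ : 0 ≤ s₁) (hbox₁ : ∑ i, ((|a i| : ℝ)) ^ (-s₁) = 1)
    (s₂ : ℝ) (hs₂ : 0 ≤ s₂) (hbox₂ : ∑ j, ((|c j| : ℝ)) ^ (-s₂) = 1) :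
    s₁ ≤ s₂ := by
  obtain ⟨x₀, hx₀⟩ := hF₁.nonempty
  obtain ⟨R₁, cl, hclpos, hR₁2, hlow⟩ := growth_lower ha hss₁ hx₀ hs₁ hbox₁
  obtain ⟨R₂, C, hR₂2, hCnn, hup⟩ := growth_upper hc hss₂ hs₂ hbox₂
  by_contra hcon
  push_neg at hcon
  have he : 0 < s₁ - s₂ := by linarith
  have bound : ∀ R : ℝ, max (max R₁ R₂) 1 ≤ R → cl * R ^ s₁ ≤ C * R ^ s₂ := by
    intro R hR
    have h1 := hlow R (le_trans (le_trans (le_max_left R₁ R₂) (le_max_left _ 1)) hR)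
    have h2 := hup R (le_trans (le_trans (le_max_right R₁ R₂) (le_max_left _ 1)) hR)
    have h3 : (icnt F₁ R : ℝ) ≤ (icnt F₂ R : ℝ) := by
      exact_mod_cast icnt_subset F₁ F₂ hsub R
    linarith
  have hev1 := (tendsto_rpow_atTop he).eventually_ge_atTop (C / cl + 1)
  have hev2 := Filter.eventually_ge_atTop (max (max R₁ R₂) 1)
  obtain ⟨x, hx1, hx2⟩ := (hev1.and hev2).exists
  have hxpos : (0:ℝ) < x := lt_of_lt_of_le one_pos (le_trans (le_max_right _ 1) hx2)
  have hb := bound x hx2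
  rw [show s₁ = s₂ + (s₁ - s₂) by ring, Real.rpow_add hxpos] at hb
  have hs₂pos : (0:ℝ) < x ^ s₂ := Real.rpow_pos_of_pos hxpos _
  have h4 : cl * x ^ (s₁ - s₂) ≤ C := by
    have h5 : (cl * x ^ (s₁ - s₂)) * x ^ s₂ ≤ C * x ^ s₂ := by linarith [hb]; 
    exact le_of_mul_le_mul_right h5 hs₂pos
  have h6 : cl * (C / cl + 1) ≤ cl * x ^ (s₁ - s₂) :=
    mul_le_mul_of_nonneg_left hx1 hclpos.le
  have h7 : cl * (C / cl + 1) = C + cl := by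
    field_simp
  linarith
end

section
/- (Well-definedness of fractal dimension in the Gaussian integers.) Let $F$ be an infinite subset of $\mathbb{Z}[i]$. Suppose $F$ is self-similar with respect to affine maps $\varphi_i(x) = a_i x + b_i$ for $i = 1, \dots, n$ (with $a_i, b_i \in \mathbb{Z}[i]$, $N(a_i) > 1$) and also self-similar with respect to affine maps $\psi_j(x) = c_j x + d_j$ for $j = 1, \dots, m$ (with $c_j, d_j \in \mathbb{Z}[i]$, $N(c_j) > 1$), where $N$ denotes the norm $N(u + vi) = u^2 + v^2$. If $s \ge 0$ satisfies $\sum_{i=1}^n N(a_i)^{-s} = 1$ and $t \ge 0$ satisfies $\sum_{j=1}^m N(c_j)^{-t} = 1$, then $s = t$. -/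
/-- A subset `F` of the Gaussian integers `ℤ[i]` is self-similar with respect to the
affine maps `x ↦ a i * x + b i`: it is the disjoint union of its images. -/
def IsSelfSimilarGaussianInt (n : ℕ) (a b : Fin n → GaussianInt) (F : Set GaussianInt) : Prop :=
  (F = ⋃ i, (fun x => a i * x + b i) '' F) ∧
    Pairwise fun i j =>
      Disjoint ((fun x => a i * x + b i) '' F) ((fun x => a j * x + b j) '' F)


open Set Real

section FractalDimAux


noncomputable def nuG (x : GaussianInt) : ℝ := ‖GaussianInt.toComplex x‖

lemma nuG_nonneg (x : GaussianInt) : 0 ≤ nuG x := norm_nonneg _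

lemma nuG_mul (x y : GaussianInt) : nuG (x * y) = nuG x * nuG y := by
  simp [nuG, map_mul]

lemma nuG_sub_le (x y : GaussianInt) : nuG (x - y) ≤ nuG x + nuG y := by
  simpa [nuG, map_sub, sub_eq_add_neg] using norm_add_le (GaussianInt.toComplex x) (-(GaussianInt.toComplex y))

lemma nuG_add_le (x y : GaussianInt) : nuG (x + y) ≤ nuG x + nuG y := by
  simpa [nuG, map_add] using norm_add_le (GaussianInt.toComplex x) (GaussianInt.toComplex y)

lemma nuG_sq (x : GaussianInt) : nuG x ^ 2 = ((Zsqrtd.norm x : ℝ)) := by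
  rw [nuG, Complex.sq_norm, GaussianInt.intCast_real_norm]

lemma sqrt_two_le_nuG {x : GaussianInt} (hx : 1 < Zsqrtd.norm x) : Real.sqrt 2 ≤ nuG x := by
  have h2 : (2 : ℝ) ≤ nuG x ^ 2 := by
    rw [nuG_sq]
    exact_mod_cast hx
  calc Real.sqrt 2 ≤ Real.sqrt (nuG x ^ 2) := Real.sqrt_le_sqrt h2
    _ = nuG x := Real.sqrt_sq (nuG_nonneg x)

lemma finite_nuG_ball (r : ℝ) : {x : GaussianInt | nuG x ≤ r}.Finite := by
  set M : ℤ := ⌈r⌉ with hM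
  apply Set.Finite.subset (Set.Finite.image (fun p : ℤ × ℤ => (⟨p.1, p.2⟩ : GaussianInt))
    ((Set.finite_Icc (-M) M).prod (Set.finite_Icc (-M) M)))
  rintro ⟨xr, xi⟩ hx
  simp only [Set.mem_setOf_eq] at hx
  have hre : |(xr : ℝ)| ≤ r := by
    have := Complex.abs_re_le_norm (GaussianInt.toComplex ⟨xr, xi⟩)
    rw [GaussianInt.re_toComplex] at this
    exact this.trans hx
  have him : |(xi : ℝ)| ≤ r := by
    have := Complex.abs_im_le_norm (GaussianInt.toComplex ⟨xr, xi⟩)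
    rw [GaussianInt.im_toComplex] at this
    exact this.trans hx
  have hrM : r ≤ (M : ℝ) := by exact_mod_cast Int.le_ceil r
  refine ⟨(xr, xi), ⟨?_, ?_⟩, rfl⟩
  · rcases abs_le.mp (hre.trans hrM) with ⟨h1, h2⟩
    constructor <;> [exact_mod_cast (by exact_mod_cast h1 : (-M:ℝ) ≤ xr); exact_mod_cast h2]
  · rcases abs_le.mp (him.trans hrM) with ⟨h1, h2⟩
    constructor <;> [exact_mod_cast (by exact_mod_cast h1 : (-M:ℝ) ≤ xi); exact_mod_cast h2]


lemma ncard_finsetBiUnion_le {α ι : Type*} (u : Finset ι) (s : ι → Set α) :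
    (⋃ i ∈ u, s i).ncard ≤ ∑ i ∈ u, (s i).ncard := by
  classical
  induction u using Finset.induction_on with
  | empty => simp
  | insert _ _ ha ih =>
      rw [Finset.set_biUnion_insert, Finset.sum_insert ha]
      exact le_trans (Set.ncard_union_le _ _) (by omega)

lemma ncard_iUnion_le' {α : Type*} {n : ℕ} (s : Fin n → Set α) :
    (⋃ i, s i).ncard ≤ ∑ i, (s i).ncard := by
  simpa using ncard_finsetBiUnion_le (Finset.univ) s

lemma sum_ncard_le'_s5 {α : Type*} {m : ℕ} (s : Fin m → Set α) (S : Set α) (hS : S.Finite)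
    (hsub : ∀ j, s j ⊆ S) (hdisj : Pairwise (Function.onFun Disjoint s)) :
    ∑ j, (s j).ncard ≤ S.ncard := by
  classical
  have hfin : ∀ j, (s j).Finite := fun j => hS.subset (hsub j)
  have hTcard : ∀ j, (s j).ncard = ((hfin j).toFinset).card := fun j =>
    Set.ncard_eq_toFinset_card _ (hfin j)
  calc ∑ j, (s j).ncard = ∑ j, ((hfin j).toFinset).card := by
        exact Finset.sum_congr rfl fun j _ => hTcard j
    _ = (Finset.univ.biUnion fun j => (hfin j).toFinset).card := by
        refine (Finset.card_biUnion ?_).symm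
        intro i _ j _ hij
        rw [Function.onFun, Finset.disjoint_left]
        intro x hx hx'
        exact Set.disjoint_left.mp (hdisj hij) (by simpa using hx) (by simpa using hx')
    _ ≤ hS.toFinset.card := by
        apply Finset.card_le_card
        intro x hx
        rcases Finset.mem_biUnion.mp hx with ⟨j, _, hj⟩
        simpa using hsub j (by simpa using hj)
    _ = S.ncard := (Set.ncard_eq_toFinset_card _ hS).symm


noncomputable def cntG (F : Set GaussianInt) (r : ℝ) : ℕ := (F ∩ {x | nuG x ≤ r}).ncard

lemma cntG_finite (F : Set GaussianInt) (r : ℝ) : (F ∩ {x | nuG x ≤ r}).Finite :=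
  (finite_nuG_ball r).subset inter_subset_right

lemma cntG_mono (F : Set GaussianInt) : Monotone (cntG F) := by
  intro r r' h
  exact Set.ncard_le_ncard (fun x hx => ⟨hx.1, le_trans hx.2 h⟩) (cntG_finite F r')

lemma cntG_le_sum (F : Set GaussianInt) {n : ℕ} (a b : Fin n → GaussianInt)
    (hcover : F = ⋃ i, (fun x => a i * x + b i) '' F)
    (hA : ∀ i, 0 < nuG (a i))
    (B : ℝ) (hB : ∀ i, nuG (b i) ≤ B) (r : ℝ) :
    cntG F r ≤ ∑ i, cntG F ((r + B) / nuG (a i)) := by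
  have h1 : F ∩ {x | nuG x ≤ r} ⊆
      ⋃ i, ((fun x => a i * x + b i) '' (F ∩ {x | nuG x ≤ (r + B) / nuG (a i)})) := by
    rintro y ⟨hyF, hyr⟩
    rw [hcover] at hyF
    rcases Set.mem_iUnion.mp hyF with ⟨i, x, hxF, hxy⟩
    refine Set.mem_iUnion.mpr ⟨i, x, ⟨hxF, ?_⟩, hxy⟩
    rw [Set.mem_setOf_eq, le_div_iff₀' (hA i)]
    calc nuG (a i) * nuG x = nuG (a i * x) := (nuG_mul _ _).symm
      _ = nuG ((a i * x + b i) - b i) := by ring_nf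
      _ ≤ nuG (a i * x + b i) + nuG (b i) := nuG_sub_le _ _
      _ ≤ r + B := by
          have : nuG (a i * x + b i) ≤ r := by simpa [hxy] using hyr
          exact add_le_add this (hB i)
  calc cntG F r ≤ (⋃ i, ((fun x => a i * x + b i) '' (F ∩ {x | nuG x ≤ (r + B) / nuG (a i)}))).ncard := by
        exact Set.ncard_le_ncard h1
          (Set.finite_iUnion fun i => ((cntG_finite F _).image _))
    _ ≤ ∑ i, ((fun x => a i * x + b i) '' (F ∩ {x | nuG x ≤ (r + B) / nuG (a i)})).ncard :=
        ncard_iUnion_le' _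
    _ ≤ ∑ i, cntG F ((r + B) / nuG (a i)) := by
        apply Finset.sum_le_sum
        intro i _
        exact Set.ncard_image_le (cntG_finite F _)

lemma sum_le_cntG (F : Set GaussianInt) {m : ℕ} (c d : Fin m → GaussianInt)
    (himg : ∀ j, (fun x => c j * x + d j) '' F ⊆ F)
    (hdisj : Pairwise fun i j =>
      Disjoint ((fun x => c i * x + d i) '' F) ((fun x => c j * x + d j) '' F))
    (hc0 : ∀ j, c j ≠ 0) (hD : ∀ j, 0 < nuG (c j))
    (B' : ℝ) (hB' : ∀ j, nuG (d j) ≤ B') (r : ℝ) :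
    ∑ j, cntG F ((r - B') / nuG (c j)) ≤ cntG F r := by
  set s : Fin m → Set GaussianInt :=
    fun j => (fun x => c j * x + d j) '' (F ∩ {x | nuG x ≤ (r - B') / nuG (c j)}) with hs
  have hinj : ∀ j, Function.Injective (fun x => c j * x + d j) := by
    intro j x y hxy
    simp only [add_left_inj] at hxy
    exact mul_left_cancel₀ (hc0 j) hxy
  have hcard : ∀ j, (s j).ncard = cntG F ((r - B') / nuG (c j)) := fun j =>
    Set.ncard_image_of_injective _ (hinj j)
  have hsub : ∀ j, s j ⊆ F ∩ {x | nuG x ≤ r} := by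
    rintro j y ⟨x, ⟨hxF, hxr⟩, rfl⟩
    refine ⟨himg j ⟨x, hxF, rfl⟩, ?_⟩
    rw [Set.mem_setOf_eq] at hxr ⊢
    calc nuG (c j * x + d j) ≤ nuG (c j * x) + nuG (d j) := nuG_add_le _ _
      _ = nuG (c j) * nuG x + nuG (d j) := by rw [nuG_mul]
      _ ≤ (r - B') + B' := by
          refine add_le_add ?_ (hB' j)
          rw [le_div_iff₀' (hD j)] at hxr
          exact hxr
      _ = r := by ring
  have hdisj' : Pairwise (Function.onFun Disjoint s) := by
    intro i j hij
    exact (hdisj hij).mono (Set.image_mono inter_subset_left)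
      (Set.image_mono inter_subset_left)
  calc ∑ j, cntG F ((r - B') / nuG (c j)) = ∑ j, (s j).ncard := by
        exact (Finset.sum_congr rfl fun j _ => (hcard j).symm)
    _ ≤ cntG F r := sum_ncard_le'_s5 s _ (cntG_finite F r) hsub hdisj'

set_option maxHeartbeats 1000000 in
lemma upper_growth {n : ℕ} (C : ℝ → ℕ) (mono : Monotone C)
    (A : Fin n → ℝ) (hA : ∀ i, Real.sqrt 2 ≤ A i) (B : ℝ) (hB : 0 ≤ B)
    (rec : ∀ r : ℝ, C r ≤ ∑ i, C ((r + B) / A i))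
    (u : ℝ) (hu : 0 < u) (hρ : ∑ i, A i ^ (-(2*u)) < 1) :
    ∃ K > 0, ∃ R ≥ 1, ∀ r ≥ R, (C r : ℝ) ≤ K * r ^ (2*u) := by
  have hsqrt2 : (1:ℝ) < Real.sqrt 2 := by
    rw [show (1:ℝ) = Real.sqrt 1 by simp]
    exact Real.sqrt_lt_sqrt (by norm_num) (by norm_num)
  have hApos : ∀ i, 0 < A i := fun i => lt_of_lt_of_le (by linarith) (hA i)
  rcases Nat.eq_zero_or_pos n with hn | hn
  · -- n = 0 : C is identically 0
    subst hn
    refine ⟨1, one_pos, 1, le_refl 1, fun r hr => ?_⟩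
    have : C r = 0 := by simpa using rec r
    rw [this]
    simpa using Real.rpow_nonneg (by linarith : (0:ℝ) ≤ r) (2*u)
  -- n ≥ 1
  set ρ : ℝ := ∑ i, A i ^ (-(2*u)) with hρdef
  have hρpos : 0 < ρ := by
    apply Finset.sum_pos (fun i _ => Real.rpow_pos_of_pos (hApos i) _)
    exact Finset.univ_nonempty_iff.mpr (Fin.pos_iff_nonempty.mp hn)
  set τ : ℝ := (1 + ρ) / (2 * ρ) with hτdef
  have hτ : 1 < τ := by
    rw [hτdef, lt_div_iff₀ (by linarith)]
    linarith
  have hτρ : τ * ρ = (1 + ρ) / 2 := by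
    rw [hτdef]; field_simp
  obtain ⟨ε, hε, hε5, h1ε⟩ : ∃ ε : ℝ, 0 < ε ∧ ε ≤ 1/5 ∧ (1 + ε) ^ (2*u) ≤ τ := by
    have hτpow : 1 < τ ^ (1/(2*u)) :=
      (Real.one_lt_rpow_iff_of_pos (by linarith)).mpr (Or.inl ⟨hτ, by positivity⟩)
    have hmin : 0 < min (τ ^ (1/(2*u)) - 1) (1/5) := lt_min (by linarith) (by norm_num)
    refine ⟨min (τ ^ (1/(2*u)) - 1) (1/5), hmin, min_le_right _ _, ?_⟩
    have h1 : 1 + min (τ ^ (1/(2*u)) - 1) (1/5) ≤ τ ^ (1/(2*u)) := by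
      have := min_le_left (τ ^ (1/(2*u)) - 1) (1/5)
      linarith
    calc (1 + min (τ ^ (1/(2*u)) - 1) (1/5)) ^ (2*u) ≤ (τ ^ (1/(2*u))) ^ (2*u) :=
          Real.rpow_le_rpow (by linarith) h1 (by positivity)
      _ = τ ^ ((1/(2*u)) * (2*u)) := (Real.rpow_mul (by linarith) _ _).symm
      _ = τ := by
          rw [one_div, inv_mul_cancel₀ (by positivity)]
          exact Real.rpow_one τ
  set γ : ℝ := Real.sqrt 2 / (1 + ε) with hγdef
  have hsq2 : Real.sqrt 2 ^ 2 = 2 := Real.sq_sqrt (by norm_num)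
  have h65 : (1:ℝ) + ε < Real.sqrt 2 := by
    have : (6/5 : ℝ) < Real.sqrt 2 := by
      rw [show (6/5:ℝ) = Real.sqrt ((6/5)^2) by rw [Real.sqrt_sq (by norm_num)]]
      exact Real.sqrt_lt_sqrt (by norm_num) (by norm_num)
    linarith
  have hγ : 1 < γ := by
    rw [hγdef, lt_div_iff₀ (by linarith)]
    linarith
  set R₀ : ℝ := B / ε + 1 with hR₀def
  have hBε : 0 ≤ B / ε := div_nonneg hB hε.le
  have hR₀1 : 1 ≤ R₀ := by rw [hR₀def]; linarith
  have hR₀pos : 0 < R₀ := by linarith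
  have hεr : ∀ r, R₀ ≤ r → r + B ≤ (1 + ε) * r := by
    intro r hr
    have h1 : B ≤ ε * R₀ := by
      rw [hR₀def, mul_add, mul_one, mul_div_cancel₀ _ hε.ne']
      linarith
    nlinarith
  set C₀ : ℝ := (C R₀ : ℝ) with hC₀def
  have hC₀ : 0 ≤ C₀ := Nat.cast_nonneg _
  set Cγ : ℝ := (C (R₀ * γ) : ℝ) with hCγdef
  have hCγ : 0 ≤ Cγ := Nat.cast_nonneg _
  have hR₀pow : 0 < R₀ ^ (2*u) := Real.rpow_pos_of_pos hR₀pos _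
  set K : ℝ := (Cγ + 1 + 2*n*C₀/(1-ρ)) / R₀ ^ (2*u) with hKdef
  have h2nC : 0 ≤ 2*(n:ℝ)*C₀/(1-ρ) := div_nonneg (by positivity) (by linarith)
  have hnum : 0 < Cγ + 1 + 2*n*C₀/(1-ρ) := by linarith
  have hK : 0 < K := div_pos hnum hR₀pow
  have hKfact : K * R₀ ^ (2*u) = Cγ + 1 + 2*n*C₀/(1-ρ) :=
    div_mul_cancel₀ _ hR₀pow.ne'
  -- main induction
  have main : ∀ k : ℕ, ∀ r, R₀ ≤ r → r ≤ R₀ * γ ^ k → (C r : ℝ) ≤ K * r ^ (2*u) := by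
    intro k
    induction k with
    | zero =>
        intro r hr hr'
        simp only [pow_zero, mul_one] at hr'
        obtain rfl : r = R₀ := le_antisymm hr' hr
        have h1 : (C R₀ : ℝ) ≤ Cγ := by
          rw [hCγdef]
          exact_mod_cast mono (le_mul_of_one_le_right hR₀pos.le hγ.le)
        calc (C R₀ : ℝ) ≤ Cγ := h1
          _ ≤ K * R₀ ^ (2*u) := by rw [hKfact]; linarith
    | succ k ih =>
        intro r hr hr'
        by_cases hcase : r ≤ R₀ * γ ^ k
        · exact ih r hr hcase
        push_neg at hcase
        have hrpos : 0 < r := lt_of_lt_of_le hR₀pos hr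
        have hγpos : 0 < γ := by linarith
        have hrγ : r / γ ≤ R₀ * γ ^ k := by
          rw [div_le_iff₀ hγpos]
          calc r ≤ R₀ * γ ^ (k+1) := hr'
            _ = R₀ * γ ^ k * γ := by ring
        -- per-term bound
        have hterm : ∀ i, (C ((r + B) / A i) : ℝ) ≤ K * ((1+ε)*r / A i) ^ (2*u) + C₀ := by
          intro i
          have hle : (r + B) / A i ≤ (1+ε)*r / A i :=
            (div_le_div_iff_of_pos_right (hApos i)).mpr (hεr r hr)
          have hbnd : (1+ε)*r / A i ≤ r / γ := by
            rw [hγdef, div_div_eq_mul_div]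
            calc (1+ε)*r / A i ≤ (1+ε)*r / Real.sqrt 2 :=
                  div_le_div_of_nonneg_left (mul_nonneg (by linarith) hrpos.le) (by linarith) (hA i)
              _ = r * (1+ε) / Real.sqrt 2 := by ring_nf
          have hnn : (0:ℝ) ≤ (1+ε)*r / A i :=
            div_nonneg (mul_nonneg (by linarith) hrpos.le) (hApos i).le
          by_cases hcase2 : R₀ ≤ (r + B) / A i
          · have hIH := ih _ hcase2 (le_trans hle hbnd |>.trans hrγ)
            calc (C ((r + B) / A i) : ℝ) ≤ K * ((r + B) / A i) ^ (2*u) := hIH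
              _ ≤ K * ((1+ε)*r / A i) ^ (2*u) := by
                  apply mul_le_mul_of_nonneg_left ?_ hK.le
                  exact Real.rpow_le_rpow (div_nonneg (by linarith) (hApos i).le) hle (by positivity)
              _ ≤ K * ((1+ε)*r / A i) ^ (2*u) + C₀ := by linarith
          · push_neg at hcase2
            have h1 : (C ((r + B) / A i) : ℝ) ≤ C₀ := by
              rw [hC₀def]
              exact_mod_cast mono hcase2.le
            have h2 : 0 ≤ K * ((1+ε)*r / A i) ^ (2*u) := by
              apply mul_nonneg hK.le (Real.rpow_nonneg hnn _)
            linarith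
        -- sum the bounds
        have hsum : (C r : ℝ) ≤ K * ((1+ε)*r) ^ (2*u) * ρ + n * C₀ := by
          have h0 : (C r : ℝ) ≤ ∑ i, (C ((r + B) / A i) : ℝ) := by
            exact_mod_cast rec r
          have h1 : ∑ i, (C ((r + B) / A i) : ℝ) ≤
              ∑ i, (K * ((1+ε)*r / A i) ^ (2*u) + C₀) :=
            Finset.sum_le_sum fun i _ => hterm i
          have h2 : ∑ i, (K * ((1+ε)*r / A i) ^ (2*u) + C₀) =
              K * ((1+ε)*r) ^ (2*u) * ρ + n * C₀ := by
            rw [Finset.sum_add_distrib, Finset.sum_const, Finset.card_univ, Fintype.card_fin,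
              nsmul_eq_mul]
            congr 1
            rw [hρdef, Finset.mul_sum]
            apply Finset.sum_congr rfl
            intro i _
            rw [Real.div_rpow (mul_nonneg (by linarith) hrpos.le) (hApos i).le,
              Real.rpow_neg (hApos i).le, div_eq_mul_inv]
            ring
          linarith
        -- close
        have hpow : ((1+ε)*r) ^ (2*u) = (1+ε) ^ (2*u) * r ^ (2*u) :=
          Real.mul_rpow (by linarith) hrpos.le
        have hrpow : 0 < r ^ (2*u) := Real.rpow_pos_of_pos hrpos _
        have hRpow : R₀ ^ (2*u) ≤ r ^ (2*u) :=
          Real.rpow_le_rpow hR₀pos.le hr (by positivity)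
        have hKR : 2*n*C₀/(1-ρ) ≤ K * r ^ (2*u) := by
          calc 2*n*C₀/(1-ρ) ≤ Cγ + 1 + 2*n*C₀/(1-ρ) := by linarith
            _ = K * R₀ ^ (2*u) := hKfact.symm
            _ ≤ K * r ^ (2*u) := mul_le_mul_of_nonneg_left hRpow hK.le
        have hKRρ : 2*n*C₀ ≤ K * r ^ (2*u) * (1-ρ) := by
          rw [div_le_iff₀ (by linarith : (0:ℝ) < 1-ρ)] at hKR
          exact hKR
        have hmid : K * ((1+ε)*r) ^ (2*u) * ρ ≤ K * r ^ (2*u) * ((1+ρ)/2) := by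
          rw [hpow]
          calc K * ((1+ε) ^ (2*u) * r ^ (2*u)) * ρ
              ≤ K * (τ * r ^ (2*u)) * ρ := by
                apply mul_le_mul_of_nonneg_right ?_ hρpos.le
                apply mul_le_mul_of_nonneg_left ?_ hK.le
                exact mul_le_mul_of_nonneg_right h1ε hrpow.le
            _ = K * r ^ (2*u) * (τ * ρ) := by ring
            _ = K * r ^ (2*u) * ((1+ρ)/2) := by rw [hτρ]
        have := hsum
        nlinarith [hmid, hKRρ]
  -- conclusion
  refine ⟨K, hK, R₀, hR₀1, fun r hr => ?_⟩
  obtain ⟨k, hk⟩ := pow_unbounded_of_one_lt (r / R₀) hγ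
  apply main k r hr
  rw [div_lt_iff₀ hR₀pos] at hk
  linarith [hk]

set_option maxHeartbeats 1000000 in
lemma lower_growth {m : ℕ} (C : ℝ → ℕ) (mono : Monotone C)
    (D : Fin m → ℝ) (hD : ∀ j, Real.sqrt 2 ≤ D j) (B' : ℝ) (hB' : 0 ≤ B')
    (rec : ∀ r : ℝ, ∑ j, C ((r - B') / D j) ≤ C r)
    (v : ℝ) (hv : 0 < v) (hρ : 1 < ∑ j, D j ^ (-(2*v)))
    (r₀ : ℝ) (hr₀ : 0 ≤ r₀) (hC1 : 1 ≤ C r₀) :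
    ∃ k₀ > 0, ∃ R ≥ 1, ∀ r ≥ R, k₀ * r ^ (2*v) ≤ (C r : ℝ) := by
  have hsqrt2 : (1:ℝ) < Real.sqrt 2 := by
    rw [show (1:ℝ) = Real.sqrt 1 by simp]
    exact Real.sqrt_lt_sqrt (by norm_num) (by norm_num)
  have hDpos : ∀ j, 0 < D j := fun j => lt_of_lt_of_le (by linarith) (hD j)
  set ρ : ℝ := ∑ j, D j ^ (-(2*v)) with hρdef
  have hρpos : (0:ℝ) < ρ := by linarith
  set τ : ℝ := (1 + ρ) / (2 * ρ) with hτdef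
  have hτ1 : τ < 1 := by
    rw [hτdef, div_lt_one (by linarith)]
    linarith
  have hτpos : 0 < τ := by
    rw [hτdef]
    positivity
  have hτρ : τ * ρ = (1 + ρ) / 2 := by rw [hτdef]; field_simp
  -- choose ε
  obtain ⟨ε, hε, hε1, h1ε⟩ : ∃ ε : ℝ, 0 < ε ∧ ε < 1 ∧ (1 - ε) ^ (2*v) = τ := by
    have hτpow1 : τ ^ (1/(2*v)) < 1 :=
      Real.rpow_lt_one hτpos.le hτ1 (by positivity)
    have hτpow0 : 0 < τ ^ (1/(2*v)) := Real.rpow_pos_of_pos hτpos _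
    refine ⟨1 - τ ^ (1/(2*v)), by linarith, by linarith, ?_⟩
    have : (1 : ℝ) - (1 - τ ^ (1/(2*v))) = τ ^ (1/(2*v)) := by ring
    rw [this, ← Real.rpow_mul hτpos.le, one_div, inv_mul_cancel₀ (by positivity),
      Real.rpow_one]
  set Dsum : ℝ := ∑ j, D j with hDsumdef
  have hDsumle : ∀ j, D j ≤ Dsum := fun j =>
    Finset.single_le_sum (fun i _ => (hDpos i).le) (Finset.mem_univ j)
  have huniv : (Finset.univ : Finset (Fin m)).Nonempty := by
    apply Finset.nonempty_of_sum_ne_zero (f := fun j => D j ^ (-(2*v)))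
    rw [← hρdef]
    linarith
  obtain ⟨j₀, _⟩ := huniv
  have hDsum2 : Real.sqrt 2 ≤ Dsum := le_trans (hD j₀) (hDsumle j₀)
  have hDsumpos : 0 < Dsum := by linarith
  set R₁ : ℝ := B' / ε + r₀ + 1 with hR₁def
  have hBε : 0 ≤ B' / ε := div_nonneg hB' hε.le
  have hR₁1 : 1 ≤ R₁ := by rw [hR₁def]; linarith
  have hR₁r₀ : r₀ ≤ R₁ := by rw [hR₁def]; linarith
  have hR₁pos : 0 < R₁ := by linarith
  have hrB : ∀ r, R₁ ≤ r → (1 - ε) * r ≤ r - B' := by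
    intro r hr
    have h1 : B' ≤ ε * R₁ := by
      rw [hR₁def, mul_add, mul_add, mul_div_cancel₀ _ hε.ne']
      nlinarith
    nlinarith
  set R₂ : ℝ := R₁ * (Dsum / (1 - ε)) with hR₂def
  have hfac : 1 ≤ Dsum / (1 - ε) := by
    rw [le_div_iff₀ (by linarith)]
    linarith
  have hR₂R₁ : R₁ ≤ R₂ := le_mul_of_one_le_right hR₁pos.le hfac
  have hR₂pos : 0 < R₂ := lt_of_lt_of_le hR₁pos hR₂R₁
  have hR₂pow : 0 < R₂ ^ (2*v) := Real.rpow_pos_of_pos hR₂pos _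
  set k₀ : ℝ := 1 / R₂ ^ (2*v) with hk₀def
  have hk₀ : 0 < k₀ := by positivity
  -- main induction
  have main : ∀ k : ℕ, ∀ r, R₁ ≤ r → r ≤ R₂ * (Real.sqrt 2) ^ k →
      k₀ * r ^ (2*v) ≤ (C r : ℝ) := by
    intro k
    induction k with
    | zero =>
        intro r hr hr'
        simp only [pow_zero, mul_one] at hr'
        have hrpos : 0 < r := lt_of_lt_of_le hR₁pos hr
        have h1 : k₀ * r ^ (2*v) ≤ 1 := by
          rw [hk₀def, div_mul_eq_mul_div, div_le_one hR₂pow, one_mul]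
          exact Real.rpow_le_rpow hrpos.le hr' (by positivity)
        have h2 : (1:ℝ) ≤ (C r : ℝ) := by
          exact_mod_cast le_trans hC1 (mono (le_trans hR₁r₀ hr))
        linarith
    | succ k ih =>
        intro r hr hr'
        by_cases hcase : r ≤ R₂ * (Real.sqrt 2) ^ k
        · exact ih r hr hcase
        push_neg at hcase
        have hR₂k : R₂ ≤ R₂ * (Real.sqrt 2) ^ k :=
          le_mul_of_one_le_right hR₂pos.le (one_le_pow₀ hsqrt2.le)
        have hrR₂ : R₂ < r := lt_of_le_of_lt hR₂k hcase
        have hrpos : 0 < r := lt_of_lt_of_le hR₂pos hrR₂.le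
        -- per-term bound
        have hterm : ∀ j, k₀ * ((1-ε)*r / D j) ^ (2*v) ≤ (C ((r - B') / D j) : ℝ) := by
          intro j
          have hlow : (1-ε)*r / D j ≤ (r - B') / D j :=
            (div_le_div_iff_of_pos_right (hDpos j)).mpr (hrB r (le_trans hR₂R₁ hrR₂.le))
          have hge : R₁ ≤ (1-ε)*r / D j := by
            have h1 : R₁ * Dsum / D j ≤ (1-ε)*r / D j := by
              apply (div_le_div_iff_of_pos_right (hDpos j)).mpr
              calc R₁ * Dsum = (1-ε) * R₂ := by
                    rw [hR₂def, mul_comm (1-ε), mul_assoc,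
                      div_mul_cancel₀ _ (by linarith : (1-ε) ≠ 0)]
                _ ≤ (1-ε) * r := by
                    apply mul_le_mul_of_nonneg_left hrR₂.le (by linarith)
            calc R₁ = R₁ * D j / D j := by
                  rw [mul_div_cancel_right₀ _ (hDpos j).ne']
              _ ≤ R₁ * Dsum / D j :=
                  (div_le_div_iff_of_pos_right (hDpos j)).mpr
                    (mul_le_mul_of_nonneg_left (hDsumle j) hR₁pos.le)
              _ ≤ (1-ε)*r / D j := h1
          have hup : (r - B') / D j ≤ R₂ * (Real.sqrt 2) ^ k := by
            calc (r - B') / D j ≤ r / D j :=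
                  (div_le_div_iff_of_pos_right (hDpos j)).mpr (by linarith)
              _ ≤ r / Real.sqrt 2 :=
                  div_le_div_of_nonneg_left hrpos.le (by linarith) (hD j)
              _ ≤ R₂ * (Real.sqrt 2) ^ k := by
                  rw [div_le_iff₀ (by linarith)]
                  calc r ≤ R₂ * (Real.sqrt 2) ^ (k+1) := hr'
                    _ = R₂ * (Real.sqrt 2) ^ k * Real.sqrt 2 := by ring
          have hIH := ih _ (le_trans hge hlow) hup
          calc k₀ * ((1-ε)*r / D j) ^ (2*v) ≤ k₀ * ((r - B') / D j) ^ (2*v) := by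
                apply mul_le_mul_of_nonneg_left ?_ hk₀.le
                apply Real.rpow_le_rpow ?_ hlow (by positivity)
                exact div_nonneg (mul_nonneg (by linarith) hrpos.le) (hDpos j).le
            _ ≤ (C ((r - B') / D j) : ℝ) := hIH
        -- sum the bounds
        have hsumeq : ∑ j, k₀ * ((1-ε)*r / D j) ^ (2*v) = k₀ * ((1-ε)*r) ^ (2*v) * ρ := by
          rw [hρdef, Finset.mul_sum]
          apply Finset.sum_congr rfl
          intro j _
          rw [Real.div_rpow (mul_nonneg (by linarith) hrpos.le) (hDpos j).le,
            Real.rpow_neg (hDpos j).le, div_eq_mul_inv]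
          ring
        have hchain : k₀ * ((1-ε)*r) ^ (2*v) * ρ ≤ (C r : ℝ) := by
          rw [← hsumeq]
          calc ∑ j, k₀ * ((1-ε)*r / D j) ^ (2*v) ≤ ∑ j, (C ((r - B') / D j) : ℝ) :=
                Finset.sum_le_sum fun j _ => hterm j
            _ ≤ (C r : ℝ) := by exact_mod_cast rec r
        have hpow : ((1-ε)*r) ^ (2*v) = (1-ε) ^ (2*v) * r ^ (2*v) :=
          Real.mul_rpow (by linarith) hrpos.le
        have hrpow : 0 < r ^ (2*v) := Real.rpow_pos_of_pos hrpos _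
        have hfin : k₀ * r ^ (2*v) ≤ k₀ * ((1-ε)*r) ^ (2*v) * ρ := by
          rw [hpow, h1ε]
          calc k₀ * r ^ (2*v) ≤ k₀ * r ^ (2*v) * ((1+ρ)/2) := by
                nlinarith [mul_pos hk₀ hrpow]
            _ = k₀ * (τ * r ^ (2*v)) * ρ := by rw [← hτρ]; ring
            _ = k₀ * (τ * r ^ (2*v)) * ρ := rfl
        calc k₀ * r ^ (2*v) ≤ k₀ * ((1-ε)*r) ^ (2*v) * ρ := hfin
          _ ≤ (C r : ℝ) := hchain
  -- conclusion
  refine ⟨k₀, hk₀, R₂, le_trans hR₁1 hR₂R₁, fun r hr => ?_⟩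
  obtain ⟨k, hk⟩ := pow_unbounded_of_one_lt (r / R₂) hsqrt2
  apply main k r (le_trans hR₂R₁ hr)
  rw [div_lt_iff₀ hR₂pos] at hk
  linarith [hk]




lemma nuG_rpow (x : GaussianInt) (w : ℝ) :
    nuG x ^ (-(2*w)) = ((Zsqrtd.norm x : ℝ)) ^ (-w) := by
  rw [← nuG_sq, ← Real.rpow_natCast (nuG x) 2, ← Real.rpow_mul (nuG_nonneg x)]
  norm_num

lemma norm_one_lt_cast {x : GaussianInt} (hx : 1 < Zsqrtd.norm x) :
    (1:ℝ) < ((Zsqrtd.norm x : ℝ)) := by exact_mod_cast hx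

lemma key_lemma (F : Set GaussianInt) (hFne : F.Nonempty)
    {n : ℕ} (a b : Fin n → GaussianInt) (ha : ∀ i, 1 < Zsqrtd.norm (a i))
    (hss₁ : IsSelfSimilarGaussianInt n a b F)
    {m : ℕ} (c d : Fin m → GaussianInt) (hc : ∀ j, 1 < Zsqrtd.norm (c j))
    (hss₂ : IsSelfSimilarGaussianInt m c d F)
    {s t : ℝ} (hs : 0 ≤ s) (hbox₁ : ∑ i, ((Zsqrtd.norm (a i) : ℝ)) ^ (-s) = 1)
    (hbox₂ : ∑ j, ((Zsqrtd.norm (c j) : ℝ)) ^ (-t) = 1)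
    (hst : s < t) : False := by
  have ht : 0 < t := lt_of_le_of_lt hs hst
  set u : ℝ := (2*s + t)/3 with hudef
  set v : ℝ := (s + 2*t)/3 with hvdef
  have hu : 0 < u := by rw [hudef]; linarith
  have hv : 0 < v := by rw [hvdef]; linarith
  have hsu : s < u := by rw [hudef]; linarith
  have hvt : v < t := by rw [hvdef]; linarith
  have huv : u < v := by rw [hudef, hvdef]; linarith
  -- nonempty index types
  have hn : n ≠ 0 := by
    intro h
    subst h
    simp at hbox₁
  have hm : m ≠ 0 := by
    intro h
    subst h
    simp at hbox₂
  -- the a-system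
  have hA2 : ∀ i, Real.sqrt 2 ≤ nuG (a i) := fun i => sqrt_two_le_nuG (ha i)
  have hApos : ∀ i, 0 < nuG (a i) := fun i =>
    lt_of_lt_of_le (Real.sqrt_pos.mpr (by norm_num)) (hA2 i)
  have hρa : ∑ i, nuG (a i) ^ (-(2*u)) < 1 := by
    rw [← hbox₁]
    apply Finset.sum_lt_sum_of_nonempty
      (Finset.univ_nonempty_iff.mpr (Fin.pos_iff_nonempty.mp (Nat.pos_of_ne_zero hn)))
    intro i _
    rw [nuG_rpow]
    exact (Real.rpow_lt_rpow_left_iff (norm_one_lt_cast (ha i))).mpr (by linarith)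
  -- the c-system
  have hD2 : ∀ j, Real.sqrt 2 ≤ nuG (c j) := fun j => sqrt_two_le_nuG (hc j)
  have hDpos : ∀ j, 0 < nuG (c j) := fun j =>
    lt_of_lt_of_le (Real.sqrt_pos.mpr (by norm_num)) (hD2 j)
  have hρc : 1 < ∑ j, nuG (c j) ^ (-(2*v)) := by
    rw [← hbox₂]
    apply Finset.sum_lt_sum_of_nonempty
      (Finset.univ_nonempty_iff.mpr (Fin.pos_iff_nonempty.mp (Nat.pos_of_ne_zero hm)))
    intro j _
    rw [nuG_rpow]
    exact (Real.rpow_lt_rpow_left_iff (norm_one_lt_cast (hc j))).mpr (by linarith)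
  -- bounds on translations
  set B : ℝ := ∑ i, nuG (b i) with hBdef
  have hB : ∀ i, nuG (b i) ≤ B := fun i =>
    Finset.single_le_sum (fun i _ => nuG_nonneg (b i)) (Finset.mem_univ i)
  have hB0 : 0 ≤ B := Finset.sum_nonneg fun i _ => nuG_nonneg (b i)
  set B' : ℝ := ∑ j, nuG (d j) with hB'def
  have hB' : ∀ j, nuG (d j) ≤ B' := fun j =>
    Finset.single_le_sum (fun j _ => nuG_nonneg (d j)) (Finset.mem_univ j)
  have hB'0 : 0 ≤ B' := Finset.sum_nonneg fun j _ => nuG_nonneg (d j)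
  -- upper bound
  obtain ⟨K, hK, RU, hRU, hupper⟩ := upper_growth (cntG F) (cntG_mono F)
    (fun i => nuG (a i)) hA2 B hB0
    (fun r => cntG_le_sum F a b hss₁.1 hApos B hB r) u hu hρa
  -- lower bound
  have himg : ∀ j, (fun x => c j * x + d j) '' F ⊆ F := by
    intro j
    rw [hss₂.1]
    exact Set.subset_iUnion_of_subset j (by rw [← hss₂.1])
  have hc0 : ∀ j, c j ≠ 0 := by
    intro j hj
    have := hc j
    rw [hj] at this
    simp [Zsqrtd.norm] at this
  obtain ⟨x₀, hx₀⟩ := hFne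
  have hC1 : 1 ≤ cntG F (nuG x₀) :=
    (Set.ncard_pos (cntG_finite F (nuG x₀))).mpr ⟨x₀, hx₀, Set.mem_setOf_eq ▸ le_refl (nuG x₀)⟩
  obtain ⟨k₀, hk₀, RL, hRL, hlower⟩ := lower_growth (cntG F) (cntG_mono F)
    (fun j => nuG (c j)) hD2 B' hB'0
    (fun r => sum_le_cntG F c d himg hss₂.2 hc0 hDpos B' hB' r) v hv hρc
    (nuG x₀) (nuG_nonneg x₀) hC1
  -- combine
  set p : ℝ := 2*v - 2*u with hpdef
  have hp : 0 < p := by rw [hpdef]; linarith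
  set X : ℝ := (K/k₀ + 1) ^ p⁻¹ with hXdef
  have hXnn : 0 ≤ X := Real.rpow_nonneg (by positivity) _
  set R : ℝ := max (max RU RL) (max X 1) with hRdef
  have hRU' : RU ≤ R := le_trans (le_max_left _ _) (le_max_left _ _)
  have hRL' : RL ≤ R := le_trans (le_max_right _ _) (le_max_left _ _)
  have hXR : X ≤ R := le_trans (le_max_left _ _) (le_max_right _ _)
  have hR1 : 1 ≤ R := le_trans (le_max_right _ _) (le_max_right _ _)
  have hRpos : 0 < R := by linarith
  have h1 : k₀ * R ^ (2*v) ≤ (cntG F R : ℝ) := hlower R hRL'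
  have h2 : (cntG F R : ℝ) ≤ K * R ^ (2*u) := hupper R hRU'
  have h3 : R ^ (2*v) = R ^ (2*u) * R ^ p := by
    rw [← Real.rpow_add hRpos]
    congr 1
    rw [hpdef]; ring
  have hRu : 0 < R ^ (2*u) := Real.rpow_pos_of_pos hRpos _
  have h4 : k₀ * R ^ p ≤ K := by
    have h5 : k₀ * R ^ p * R ^ (2*u) ≤ K * R ^ (2*u) := by
      calc k₀ * R ^ p * R ^ (2*u) = k₀ * R ^ (2*v) := by rw [h3]; ring
        _ ≤ (cntG F R : ℝ) := h1
        _ ≤ K * R ^ (2*u) := h2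
    exact le_of_mul_le_mul_right h5 hRu
  have h6 : K/k₀ + 1 ≤ R ^ p := by
    calc K/k₀ + 1 = X ^ p := by
          rw [hXdef, Real.rpow_inv_rpow (by positivity) hp.ne']
      _ ≤ R ^ p := Real.rpow_le_rpow hXnn hXR hp.le
  have h7 : R ^ p ≤ K / k₀ := by
    rw [le_div_iff₀ hk₀]
    linarith [h4]
  linarith

end FractalDimAux

/-- Well-definedness of the fractal dimension of an infinite self-similar subset
of the Gaussian integers `ℤ[i]`, with respect to the norm `N(u + vi) = u² + v²`. -/
theorem fractalDim_wellDefined_gaussianInt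
    (F : Set GaussianInt) (hF : F.Infinite)
    (n : ℕ) (a b : Fin n → GaussianInt) (ha : ∀ i, 1 < Zsqrtd.norm (a i))
    (hss₁ : IsSelfSimilarGaussianInt n a b F)
    (m : ℕ) (c d : Fin m → GaussianInt) (hc : ∀ j, 1 < Zsqrtd.norm (c j))
    (hss₂ : IsSelfSimilarGaussianInt m c d F)
    (s : ℝ) (hs : 0 ≤ s) (hbox₁ : ∑ i, ((Zsqrtd.norm (a i) : ℝ)) ^ (-s) = 1)
    (t : ℝ) (ht : 0 ≤ t) (hbox₂ : ∑ j, ((Zsqrtd.norm (c j) : ℝ)) ^ (-t) = 1) :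
    s = t := by
  rcases lt_trichotomy s t with h | h | h
  · exact absurd h (fun h =>
      key_lemma F hF.nonempty a b ha hss₁ c d hc hss₂ hs hbox₁ hbox₂ h |>.elim)
  · exact h
  · exact absurd h (fun h =>
      key_lemma F hF.nonempty c d hc hss₂ a b ha hss₁ ht hbox₂ hbox₁ h |>.elim)
end

section
/- (Monotonicity of fractal dimension in the Gaussian integers.) Let $F_1 \subseteq F_2 \subseteq \mathbb{Z}[i]$ be infinite sets such that $F_1$ is self-similar with respect to affine maps $\varphi_i(x) = a_i x + b_i$ for $i = 1, \dots, n$ (with $a_i, b_i \in \mathbb{Z}[i]$, $N(a_i) > 1$) and $F_2$ is self-similar with respect to affine maps $\psi_j(x) = c_j x + d_j$ for $j = 1, \dots, m$ (with $c_j, d_j \in \mathbb{Z}[i]$, $N(c_j) > 1$), where $N$ denotes the norm $N(u + vi) = u^2 + v^2$. If $s_1 \ge 0$ satisfies $\sum_{i=1}^n N(a_i)^{-s_1} = 1$ and $s_2 \ge 0$ satisfies $\sum_{j=1}^m N(c_j)^{-s_2} = 1$, then $s_1 \le s_2$. -/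
noncomputable def gabs (z : GaussianInt) : ℝ := ‖GaussianInt.toComplex z‖

lemma gabs_nonneg (z : GaussianInt) : 0 ≤ gabs z := norm_nonneg _

lemma sq_gabs (z : GaussianInt) : gabs z ^ 2 = ((Zsqrtd.norm z : ℤ) : ℝ) := by
  rw [gabs, Complex.sq_norm, GaussianInt.intCast_real_norm]

lemma gabs_mul (z w : GaussianInt) : gabs (z * w) = gabs z * gabs w := by
  simp [gabs, map_mul]

lemma gabs_neg (z : GaussianInt) : gabs (-z) = gabs z := by
  simp [gabs, map_neg]

lemma gabs_add_le (z w : GaussianInt) : gabs (z + w) ≤ gabs z + gabs w := by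
  simpa [gabs, map_add] using norm_add_le (GaussianInt.toComplex z) (GaussianInt.toComplex w)

lemma gabs_sub_le (z w : GaussianInt) : gabs (z - w) ≤ gabs z + gabs w := by
  simpa [sub_eq_add_neg, gabs_neg] using gabs_add_le z (-w)

lemma one_lt_sqrt_two : (1 : ℝ) < Real.sqrt 2 := by
  rw [show (1:ℝ) = Real.sqrt 1 by simp]
  exact Real.sqrt_lt_sqrt (by norm_num) (by norm_num)

lemma sqrt_two_le_gabs {z : GaussianInt} (hz : 1 < Zsqrtd.norm z) :
    Real.sqrt 2 ≤ gabs z := by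
  have h2 : (2 : ℝ) ≤ gabs z ^ 2 := by
    rw [sq_gabs]
    exact_mod_cast hz
  calc Real.sqrt 2 ≤ Real.sqrt (gabs z ^ 2) := Real.sqrt_le_sqrt h2
    _ = gabs z := Real.sqrt_sq (gabs_nonneg z)

lemma gabs_pos {z : GaussianInt} (hz : 1 < Zsqrtd.norm z) : 0 < gabs z :=
  lt_of_lt_of_le (by positivity) (sqrt_two_le_gabs hz)

lemma ne_zero_of_one_lt_norm {z : GaussianInt} (hz : 1 < Zsqrtd.norm z) : z ≠ 0 := by
  rintro rfl
  simp [Zsqrtd.norm] at hz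

lemma gabs_rpow_two_mul (z : GaussianInt) (s : ℝ) :
    gabs z ^ (2 * s) = ((Zsqrtd.norm z : ℤ) : ℝ) ^ s := by
  rw [Real.rpow_mul (gabs_nonneg z)]
  congr 1
  rw [show ((2:ℝ)) = ((2:ℕ):ℝ) by norm_num, Real.rpow_natCast, sq_gabs]

def gball (R : ℝ) : Set GaussianInt := {z | gabs z ≤ R}

lemma gball_finite (R : ℝ) : (gball R).Finite := by
  have hsub : gball R ⊆ (fun z : GaussianInt => (z.re, z.im)) ⁻¹'
      (Set.Icc (-⌈R⌉) ⌈R⌉ ×ˢ Set.Icc (-⌈R⌉) ⌈R⌉) := by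
    intro z hz
    have hre : |((z.re : ℤ) : ℝ)| ≤ R := by
      rw [GaussianInt.intCast_re]
      exact le_trans (Complex.abs_re_le_norm _) hz
    have him : |((z.im : ℤ) : ℝ)| ≤ R := by
      rw [GaussianInt.intCast_im]
      exact le_trans (Complex.abs_im_le_norm _) hz
    have hR : R ≤ ((⌈R⌉ : ℤ) : ℝ) := Int.le_ceil R
    constructor
    · constructor
      · have : -((⌈R⌉ : ℤ) : ℝ) ≤ ((z.re : ℤ) : ℝ) := by
          nlinarith [abs_le.mp hre]
        exact_mod_cast this
      · have : ((z.re : ℤ) : ℝ) ≤ ((⌈R⌉ : ℤ) : ℝ) := by nlinarith [abs_le.mp hre]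
        exact_mod_cast this
    · constructor
      · have : -((⌈R⌉ : ℤ) : ℝ) ≤ ((z.im : ℤ) : ℝ) := by nlinarith [abs_le.mp him]
        exact_mod_cast this
      · have : ((z.im : ℤ) : ℝ) ≤ ((⌈R⌉ : ℤ) : ℝ) := by nlinarith [abs_le.mp him]
        exact_mod_cast this
  have hfin : ((Set.Icc (-⌈R⌉) ⌈R⌉ ×ˢ Set.Icc (-⌈R⌉) ⌈R⌉) : Set (ℤ × ℤ)).Finite :=
    (Set.finite_Icc _ _).prod (Set.finite_Icc _ _)
  have hinj : Function.Injective (fun z : GaussianInt => (z.re, z.im)) := by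
    intro z w h
    cases z; cases w
    simpa [Prod.ext_iff] using h
  exact (hfin.preimage (hinj.injOn)).subset hsub
noncomputable def cnt (F : Set GaussianInt) (R : ℝ) : ℕ := (F ∩ gball R).ncard

lemma cnt_finite (F : Set GaussianInt) (R : ℝ) : (F ∩ gball R).Finite :=
  (gball_finite R).subset Set.inter_subset_right

lemma cnt_mono_left {F G : Set GaussianInt} (h : F ⊆ G) (R : ℝ) : cnt F R ≤ cnt G R :=
  Set.ncard_le_ncard (Set.inter_subset_inter_left _ h) (cnt_finite G R)

lemma cnt_mono_right (F : Set GaussianInt) {R R' : ℝ} (h : R ≤ R') : cnt F R ≤ cnt F R' :=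
  Set.ncard_le_ncard (Set.inter_subset_inter_right _ (fun z hz => le_trans hz h))
    (cnt_finite F R')

lemma affine_inj_s6 {c : GaussianInt} (hc : c ≠ 0) (d : GaussianInt) :
    Function.Injective (fun x : GaussianInt => c * x + d) := by
  intro x y h
  simp only [add_left_inj] at h
  exact mul_left_cancel₀ hc h

/-- Card of a finite union is at most the sum of cards. -/
lemma ncard_iUnion_le'_s6 {k : ℕ} (t : Fin k → Set GaussianInt) (ht : ∀ i, (t i).Finite) :
    (⋃ i, t i).ncard ≤ ∑ i, (t i).ncard := by
  classical
  have h1 : (⋃ i, t i) = ↑(Finset.univ.biUnion fun i => (ht i).toFinset) := by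
    ext x
    simp [Set.mem_iUnion]
  rw [h1, Set.ncard_coe_finset]
  calc (Finset.univ.biUnion fun i => (ht i).toFinset).card
      ≤ ∑ i, ((ht i).toFinset).card := Finset.card_biUnion_le
    _ = ∑ i, (t i).ncard := by
        refine Finset.sum_congr rfl fun i _ => ?_
        rw [Set.ncard_eq_toFinset_card _ (ht i)]

/-- Sum of cards of pairwise disjoint finite sets contained in a finite set `S`. -/
lemma sum_ncard_le_of_disjoint {k : ℕ} (t : Fin k → Set GaussianInt) (S : Set GaussianInt)
    (hS : S.Finite) (hsub : ∀ i, t i ⊆ S)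
    (hdisj : Pairwise fun i j => Disjoint (t i) (t j)) :
    ∑ i, (t i).ncard ≤ S.ncard := by
  classical
  have ht : ∀ i, (t i).Finite := fun i => hS.subset (hsub i)
  have h1 : ∑ i, (t i).ncard = (Finset.univ.biUnion fun i => (ht i).toFinset).card := by
    rw [Finset.card_biUnion]
    · refine Finset.sum_congr rfl fun i _ => (Set.ncard_eq_toFinset_card _ (ht i))
    · intro i _ j _ hij
      have := hdisj hij
      simp only [Finset.disjoint_left, Set.Finite.mem_toFinset]
      exact fun a hai haj => (Set.disjoint_left.mp this) hai haj
  rw [h1, ← Set.ncard_coe_finset]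
  refine Set.ncard_le_ncard ?_ hS
  intro x hx
  simp only [Finset.coe_biUnion, Finset.coe_univ, Set.mem_iUnion, Finset.mem_coe,
    Set.Finite.mem_toFinset] at hx
  obtain ⟨i, _, hxi⟩ := hx
  exact hsub i hxi

/-- Upper counting recursion. -/
lemma cnt_upper_rec_s6 {m : ℕ} (F : Set GaussianInt) (c d : Fin m → GaussianInt)
    (hc : ∀ j, 1 < Zsqrtd.norm (c j))
    (hU : F ⊆ ⋃ j, (fun x => c j * x + d j) '' F)
    (D R : ℝ) (hD : ∀ j, gabs (d j) ≤ D) :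
    cnt F R ≤ ∑ j, cnt F ((R + D) / gabs (c j)) := by
  have hsub : F ∩ gball R ⊆
      ⋃ j, (fun x => c j * x + d j) '' (F ∩ gball ((R + D) / gabs (c j))) := by
    rintro z ⟨hzF, hzB⟩
    obtain ⟨Sj, ⟨j, rfl⟩, hzj⟩ := hU hzF
    obtain ⟨y, hyF, hyz⟩ := hzj
    refine Set.mem_iUnion.mpr ⟨j, y, ⟨hyF, ?_⟩, hyz⟩
    have hgc : 0 < gabs (c j) := gabs_pos (hc j)
    have : gabs (c j) * gabs y = gabs (z - d j) := by
      rw [← gabs_mul]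
      congr 1
      rw [← hyz]; ring
    have h2 : gabs (c j) * gabs y ≤ R + D := by
      rw [this]
      exact le_trans (gabs_sub_le z (d j)) (add_le_add hzB (hD j))
    rw [gball, Set.mem_setOf_eq, le_div_iff₀ hgc]
    linarith [h2]
  calc cnt F R ≤ (⋃ j, (fun x => c j * x + d j) '' (F ∩ gball ((R + D) / gabs (c j)))).ncard :=
        Set.ncard_le_ncard hsub (Set.finite_iUnion fun j => (cnt_finite F _).image _)
    _ ≤ ∑ j, ((fun x => c j * x + d j) '' (F ∩ gball ((R + D) / gabs (c j)))).ncard :=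
        ncard_iUnion_le'_s6 _ (fun j => ((cnt_finite F _).image _))
    _ = ∑ j, cnt F ((R + D) / gabs (c j)) := by
        refine Finset.sum_congr rfl fun j _ => ?_
        rw [Set.ncard_image_of_injective _ (affine_inj_s6 (ne_zero_of_one_lt_norm (hc j)) (d j))]
        rfl
/-- Lower counting recursion. -/
lemma cnt_lower_rec_s6 {n : ℕ} (F : Set GaussianInt) (a b : Fin n → GaussianInt)
    (ha : ∀ i, 1 < Zsqrtd.norm (a i))
    (hEq : F = ⋃ i, (fun x => a i * x + b i) '' F)
    (hdisj : Pairwise fun i j =>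
      Disjoint ((fun x => a i * x + b i) '' F) ((fun x => a j * x + b j) '' F))
    (D R : ℝ) (hD : ∀ i, gabs (b i) ≤ D) :
    ∑ i, cnt F ((R - D) / gabs (a i)) ≤ cnt F R := by
  set t : Fin n → Set GaussianInt :=
    fun i => (fun x => a i * x + b i) '' (F ∩ gball ((R - D) / gabs (a i))) with ht
  have hsub : ∀ i, t i ⊆ F ∩ gball R := by
    rintro i z ⟨y, ⟨hyF, hyB⟩, rfl⟩
    have hgc : 0 < gabs (a i) := gabs_pos (ha i)
    constructor
    · rw [hEq]
      exact Set.mem_iUnion.mpr ⟨i, y, hyF, rfl⟩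
    · have h1 : gabs (a i * y) ≤ R - D := by
        rw [gabs_mul]
        calc gabs (a i) * gabs y ≤ gabs (a i) * ((R - D) / gabs (a i)) := by
              exact mul_le_mul_of_nonneg_left hyB (le_of_lt hgc)
          _ = R - D := by field_simp
      calc gabs (a i * y + b i) ≤ gabs (a i * y) + gabs (b i) := gabs_add_le _ _
        _ ≤ (R - D) + D := add_le_add h1 (hD i)
        _ = R := by ring
  have hd : Pairwise fun i j => Disjoint (t i) (t j) := fun i j hij =>
    Disjoint.mono (Set.image_mono Set.inter_subset_left)
      (Set.image_mono Set.inter_subset_left) (hdisj hij)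
  have := sum_ncard_le_of_disjoint t (F ∩ gball R) (cnt_finite F R) hsub hd
  refine le_trans (le_of_eq ?_) this
  refine Finset.sum_congr rfl fun i _ => ?_
  rw [ht]
  rw [Set.ncard_image_of_injective _ (affine_inj_s6 (ne_zero_of_one_lt_norm (ha i)) (b i))]
  rfl
lemma upper_growth_s6 {m : ℕ} (hm : m ≠ 0) (F : Set GaussianInt) (c d : Fin m → GaussianInt)
    (hc : ∀ j, 1 < Zsqrtd.norm (c j))
    (hU : F ⊆ ⋃ j, (fun x => c j * x + d j) '' F)
    (s : ℝ) (hs : 0 ≤ s) (hbox : ∑ j, ((Zsqrtd.norm (c j) : ℝ)) ^ (-s) = 1) :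
    ∃ C : ℝ, 0 ≤ C ∧ ∀ R : ℝ, 1 ≤ R → (cnt F R : ℝ) ≤ C * R ^ (2 * s) := by
  haveI : Nonempty (Fin m) := Fin.pos_iff_nonempty.mp (Nat.pos_of_ne_zero hm)
  have hne : (Finset.univ : Finset (Fin m)).Nonempty := Finset.univ_nonempty
  set D : ℝ := Finset.univ.sup' hne (fun j => gabs (d j)) with hDdef
  have hD : ∀ j, gabs (d j) ≤ D := fun j => Finset.le_sup' (fun j => gabs (d j)) (Finset.mem_univ j)
  have hD0 : 0 ≤ D := le_trans (gabs_nonneg (d (Classical.arbitrary _))) (hD _)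
  set Λ : ℝ := Finset.univ.sup' hne (fun j => gabs (c j)) with hΛdef
  have hΛ : ∀ j, gabs (c j) ≤ Λ := fun j => Finset.le_sup' (fun j => gabs (c j)) (Finset.mem_univ j)
  have hsqrt2 : (1:ℝ) < Real.sqrt 2 := one_lt_sqrt_two
  have hΛ2 : Real.sqrt 2 ≤ Λ :=
    le_trans (sqrt_two_le_gabs (hc (Classical.arbitrary _))) (hΛ _)
  have hΛpos : 0 < Λ := lt_of_lt_of_le (by positivity) hΛ2
  set B : ℝ := D / (Real.sqrt 2 - 1) with hBdef
  have hB0 : 0 ≤ B := div_nonneg hD0 (by linarith)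
  have hkey : ∀ j, B + D ≤ B * gabs (c j) := by
    intro j
    have hs2 : Real.sqrt 2 - 1 ≠ 0 := by linarith
    have h1 : B + D = B * Real.sqrt 2 := by
      rw [hBdef]
      field_simp
      ring
    rw [h1]
    exact mul_le_mul_of_nonneg_left (sqrt_two_le_gabs (hc j)) hB0
  -- homogeneous recursion
  have hrec : ∀ R : ℝ, cnt F (R + B) ≤ ∑ j, cnt F (R / gabs (c j) + B) := by
    intro R
    refine le_trans (cnt_upper_rec_s6 F c d hc hU D (R + B) hD) ?_
    refine Finset.sum_le_sum fun j _ => cnt_mono_right F ?_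
    have hg : 0 < gabs (c j) := gabs_pos (hc j)
    rw [div_le_iff₀ hg] at *
    have := hkey j
    calc R + B + D ≤ R + B * gabs (c j) := by linarith
      _ ≤ (R / gabs (c j) + B) * gabs (c j) := by
          rw [add_mul, div_mul_cancel₀ _ (ne_of_gt hg)]
  set C₀ : ℝ := (cnt F (Λ + B) : ℝ) with hC₀
  have hC₀0 : 0 ≤ C₀ := Nat.cast_nonneg _
  have main : ∀ k : ℕ, ∀ R : ℝ, 1 ≤ R → R ≤ Λ * Real.sqrt 2 ^ k →
      (cnt F (R + B) : ℝ) ≤ C₀ * R ^ (2 * s) := by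
    intro k
    induction k with
    | zero =>
      intro R hR1 hRΛ
      simp only [pow_zero, mul_one] at hRΛ
      have h1 : (cnt F (R + B) : ℝ) ≤ C₀ := by
        rw [hC₀]
        exact_mod_cast cnt_mono_right F (by linarith : R + B ≤ Λ + B)
      have h2 : (1:ℝ) ≤ R ^ (2 * s) := by
        have := Real.rpow_le_rpow (by norm_num : (0:ℝ) ≤ 1) hR1 (by positivity : 0 ≤ 2 * s)
        simpa using this
      nlinarith
    | succ k ih =>
      intro R hR1 hRΛ
      by_cases hcase : R ≤ Λ * Real.sqrt 2 ^ k
      · exact ih R hR1 hcase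
      push_neg at hcase
      have hRpos : 0 < R := lt_of_lt_of_le zero_lt_one hR1
      have hstep : ∀ j, 1 ≤ R / gabs (c j) ∧ R / gabs (c j) ≤ Λ * Real.sqrt 2 ^ k := by
        intro j
        have hg : 0 < gabs (c j) := gabs_pos (hc j)
        constructor
        · rw [le_div_iff₀ hg]
          have h2 : (1:ℝ) ≤ Real.sqrt 2 ^ k := one_le_pow₀ (le_of_lt hsqrt2)
          nlinarith [hΛ j]
        · have h1 : R / gabs (c j) ≤ R / Real.sqrt 2 :=
            div_le_div_of_nonneg_left (le_of_lt hRpos) (by positivity) (sqrt_two_le_gabs (hc j))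
          refine le_trans h1 ?_
          rw [div_le_iff₀ (by positivity : (0:ℝ) < Real.sqrt 2)]
          calc R ≤ Λ * Real.sqrt 2 ^ (k+1) := hRΛ
            _ = Λ * Real.sqrt 2 ^ k * Real.sqrt 2 := by ring
      calc (cnt F (R + B) : ℝ) ≤ (∑ j, cnt F (R / gabs (c j) + B) : ℕ) := by
            exact_mod_cast hrec R
        _ = ∑ j, (cnt F (R / gabs (c j) + B) : ℝ) := by push_cast; ring
        _ ≤ ∑ j, C₀ * R ^ (2 * s) * ((Zsqrtd.norm (c j) : ℝ)) ^ (-s) := by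
            refine Finset.sum_le_sum fun j _ => ?_
            have hg : 0 < gabs (c j) := gabs_pos (hc j)
            have h1 := ih _ (hstep j).1 (hstep j).2
            refine le_trans h1 (le_of_eq ?_)
            rw [Real.div_rpow (le_of_lt hRpos) (le_of_lt hg), gabs_rpow_two_mul,
              Real.rpow_neg (by exact_mod_cast le_of_lt (lt_trans zero_lt_one (hc j)) : (0:ℝ) ≤ ((Zsqrtd.norm (c j) : ℤ) : ℝ))]
            push_cast
            ring
        _ = C₀ * R ^ (2 * s) := by
            rw [← Finset.mul_sum, hbox, mul_one]
  refine ⟨C₀, hC₀0, fun R hR1 => ?_⟩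
  obtain ⟨k, hk⟩ := pow_unbounded_of_one_lt (R / Λ) hsqrt2
  have hRk : R ≤ Λ * Real.sqrt 2 ^ k := by
    rw [div_lt_iff₀ hΛpos] at hk
    linarith [hk]
  calc (cnt F R : ℝ) ≤ (cnt F (R + B) : ℝ) := by
        exact_mod_cast cnt_mono_right F (by linarith : R ≤ R + B)
    _ ≤ C₀ * R ^ (2 * s) := main k R hR1 hRk
lemma lower_growth_s6 {n : ℕ} (hn : n ≠ 0) (F : Set GaussianInt) (a b : Fin n → GaussianInt)
    (ha : ∀ i, 1 < Zsqrtd.norm (a i)) (hFne : F.Nonempty)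
    (hEq : F = ⋃ i, (fun x => a i * x + b i) '' F)
    (hdisj : Pairwise fun i j =>
      Disjoint ((fun x => a i * x + b i) '' F) ((fun x => a j * x + b j) '' F))
    (s : ℝ) (hs : 0 ≤ s) (hbox : ∑ i, ((Zsqrtd.norm (a i) : ℝ)) ^ (-s) = 1) :
    ∃ c₀ R₀ : ℝ, 0 < c₀ ∧ 1 ≤ R₀ ∧ ∀ R : ℝ, R₀ ≤ R → c₀ * R ^ (2 * s) ≤ (cnt F R : ℝ) := by
  haveI : Nonempty (Fin n) := Fin.pos_iff_nonempty.mp (Nat.pos_of_ne_zero hn)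
  have hne : (Finset.univ : Finset (Fin n)).Nonempty := Finset.univ_nonempty
  set D : ℝ := Finset.univ.sup' hne (fun i => gabs (b i)) with hDdef
  have hD : ∀ i, gabs (b i) ≤ D := fun i => Finset.le_sup' (fun i => gabs (b i)) (Finset.mem_univ i)
  have hD0 : 0 ≤ D := le_trans (gabs_nonneg (b (Classical.arbitrary _))) (hD _)
  set Λ : ℝ := Finset.univ.sup' hne (fun i => gabs (a i)) with hΛdef
  have hΛ : ∀ i, gabs (a i) ≤ Λ := fun i => Finset.le_sup' (fun i => gabs (a i)) (Finset.mem_univ i)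
  have hsqrt2 : (1:ℝ) < Real.sqrt 2 := one_lt_sqrt_two
  have hΛ2 : Real.sqrt 2 ≤ Λ :=
    le_trans (sqrt_two_le_gabs (ha (Classical.arbitrary _))) (hΛ _)
  have hΛpos : 0 < Λ := lt_of_lt_of_le (by positivity) hΛ2
  set B : ℝ := D / (Real.sqrt 2 - 1) with hBdef
  have hB0 : 0 ≤ B := div_nonneg hD0 (by linarith)
  have hkey : ∀ i, B + D ≤ B * gabs (a i) := by
    intro i
    have hs2 : Real.sqrt 2 - 1 ≠ 0 := by linarith
    have h1 : B + D = B * Real.sqrt 2 := by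
      rw [hBdef]
      field_simp
      ring
    rw [h1]
    exact mul_le_mul_of_nonneg_left (sqrt_two_le_gabs (ha i)) hB0
  -- homogeneous lower recursion
  have hrec : ∀ R : ℝ, ∑ i, cnt F (R / gabs (a i) - B) ≤ cnt F (R - B) := by
    intro R
    refine le_trans ?_ (cnt_lower_rec_s6 F a b ha hEq hdisj D (R - B) hD)
    refine Finset.sum_le_sum fun i _ => cnt_mono_right F ?_
    have hg : 0 < gabs (a i) := gabs_pos (ha i)
    rw [le_div_iff₀ hg]
    have := hkey i
    have h2 : (R / gabs (a i)) * gabs (a i) = R := div_mul_cancel₀ _ (ne_of_gt hg)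
    nlinarith [this, h2, hg]
  obtain ⟨x₀, hx₀⟩ := hFne
  set R₀ : ℝ := gabs x₀ + B + Λ + 1 with hR₀def
  have hR₀1 : 1 ≤ R₀ := by
    have := gabs_nonneg x₀
    nlinarith
  have hR₀pos : 0 < R₀ := lt_of_lt_of_le zero_lt_one hR₀1
  have hseed : 1 ≤ cnt F (R₀ - B) := by
    have hmem : x₀ ∈ F ∩ gball (R₀ - B) := by
      refine ⟨hx₀, ?_⟩
      rw [gball, Set.mem_setOf_eq]
      nlinarith
    have : 0 < (F ∩ gball (R₀ - B)).ncard :=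
      (Set.ncard_pos (cnt_finite F (R₀ - B))).mpr ⟨x₀, hmem⟩
    exact this
  set c₀ : ℝ := ((R₀ * Λ) ^ (2 * s))⁻¹ with hc₀def
  have hc₀pos : 0 < c₀ := by
    rw [hc₀def]
    exact inv_pos.mpr (Real.rpow_pos_of_pos (by positivity) _)
  have main : ∀ k : ℕ, ∀ R : ℝ, R₀ ≤ R → R ≤ R₀ * Λ * Real.sqrt 2 ^ k →
      c₀ * R ^ (2 * s) ≤ (cnt F (R - B) : ℝ) := by
    intro k
    induction k with
    | zero =>
      intro R hRl hRu
      simp only [pow_zero, mul_one] at hRu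
      have h1 : R ^ (2 * s) ≤ (R₀ * Λ) ^ (2 * s) :=
        Real.rpow_le_rpow (by linarith) hRu (by positivity)
      have h2 : c₀ * R ^ (2 * s) ≤ 1 := by
        rw [hc₀def]
        have hX : (0:ℝ) < (R₀ * Λ) ^ (2 * s) := Real.rpow_pos_of_pos (by positivity) _
        rw [inv_mul_le_iff₀ hX]
        nlinarith [h1]
      have h3 : (1 : ℝ) ≤ (cnt F (R - B) : ℝ) := by
        have := le_trans hseed (cnt_mono_right F (by linarith : R₀ - B ≤ R - B))
        exact_mod_cast this
      linarith
    | succ k ih =>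
      intro R hRl hRu
      by_cases hcase : R ≤ R₀ * Λ * Real.sqrt 2 ^ k
      · exact ih R hRl hcase
      push_neg at hcase
      have hRpos : 0 < R := lt_of_lt_of_le hR₀pos hRl
      have hs2k : (1:ℝ) ≤ Real.sqrt 2 ^ k := one_le_pow₀ (le_of_lt hsqrt2)
      have hstep : ∀ i, R₀ ≤ R / gabs (a i) ∧ R / gabs (a i) ≤ R₀ * Λ * Real.sqrt 2 ^ k := by
        intro i
        have hg : 0 < gabs (a i) := gabs_pos (ha i)
        constructor
        · rw [le_div_iff₀ hg]
          calc R₀ * gabs (a i) ≤ R₀ * Λ := mul_le_mul_of_nonneg_left (hΛ i) (le_of_lt hR₀pos)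
            _ ≤ R₀ * Λ * Real.sqrt 2 ^ k := le_mul_of_one_le_right (by positivity) hs2k
            _ ≤ R := le_of_lt hcase
        · have h1 : R / gabs (a i) ≤ R / Real.sqrt 2 :=
            div_le_div_of_nonneg_left (le_of_lt hRpos) (by positivity) (sqrt_two_le_gabs (ha i))
          refine le_trans h1 ?_
          rw [div_le_iff₀ (by positivity : (0:ℝ) < Real.sqrt 2)]
          calc R ≤ R₀ * Λ * Real.sqrt 2 ^ (k+1) := hRu
            _ = R₀ * Λ * Real.sqrt 2 ^ k * Real.sqrt 2 := by ring
      calc c₀ * R ^ (2 * s)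
          = ∑ i, c₀ * R ^ (2 * s) * ((Zsqrtd.norm (a i) : ℝ)) ^ (-s) := by
            rw [← Finset.mul_sum, hbox, mul_one]
        _ ≤ ∑ i, (cnt F (R / gabs (a i) - B) : ℝ) := by
            refine Finset.sum_le_sum fun i _ => ?_
            have hg : 0 < gabs (a i) := gabs_pos (ha i)
            have h1 := ih _ (hstep i).1 (hstep i).2
            refine le_trans (le_of_eq ?_) h1
            rw [Real.div_rpow (le_of_lt hRpos) (le_of_lt hg), gabs_rpow_two_mul,
              Real.rpow_neg (by exact_mod_cast le_of_lt (lt_trans zero_lt_one (ha i)) :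
                (0:ℝ) ≤ ((Zsqrtd.norm (a i) : ℤ) : ℝ))]
            push_cast
            ring
        _ = ((∑ i, cnt F (R / gabs (a i) - B) : ℕ) : ℝ) := by push_cast; ring
        _ ≤ (cnt F (R - B) : ℝ) := by exact_mod_cast hrec R
  refine ⟨c₀, R₀, hc₀pos, hR₀1, fun R hR => ?_⟩
  obtain ⟨k, hk⟩ := pow_unbounded_of_one_lt (R / (R₀ * Λ)) hsqrt2
  have hRk : R ≤ R₀ * Λ * Real.sqrt 2 ^ k := by
    rw [div_lt_iff₀ (by positivity : (0:ℝ) < R₀ * Λ)] at hk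
    linarith [hk]
  calc c₀ * R ^ (2 * s) ≤ (cnt F (R - B) : ℝ) := main k R hR hRk
    _ ≤ (cnt F R : ℝ) := by
        exact_mod_cast cnt_mono_right F (by linarith : R - B ≤ R)
/-- Monotonicity of the fractal dimension for nested infinite self-similar subsets
of the Gaussian integers `ℤ[i]`, with respect to the norm `N(u + vi) = u² + v²`. -/
theorem fractalDim_mono_gaussianInt
    (F₁ F₂ : Set GaussianInt) (hsub : F₁ ⊆ F₂) (hF₁ : F₁.Infinite) (hF₂ : F₂.Infinite)
    (n : ℕ) (a b : Fin n → GaussianInt) (ha : ∀ i, 1 < Zsqrtd.norm (a i))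
    (hss₁ : IsSelfSimilarGaussianInt n a b F₁)
    (m : ℕ) (c d : Fin m → GaussianInt) (hc : ∀ j, 1 < Zsqrtd.norm (c j))
    (hss₂ : IsSelfSimilarGaussianInt m c d F₂)
    (s₁ : ℝ) (hs₁ : 0 ≤ s₁) (hbox₁ : ∑ i, ((Zsqrtd.norm (a i) : ℝ)) ^ (-s₁) = 1)
    (s₂ : ℝ) (hs₂ : 0 ≤ s₂) (hbox₂ : ∑ j, ((Zsqrtd.norm (c j) : ℝ)) ^ (-s₂) = 1) :
    s₁ ≤ s₂ := by
  have hn : n ≠ 0 := by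
    rintro rfl
    simp at hbox₁
  have hm : m ≠ 0 := by
    rintro rfl
    simp at hbox₂
  obtain ⟨c₀, R₀, hc₀, hR₀, hlow⟩ :=
    lower_growth_s6 hn F₁ a b ha hF₁.nonempty hss₁.1 hss₁.2 s₁ hs₁ hbox₁
  obtain ⟨C, hC, hupp⟩ :=
    upper_growth_s6 hm F₂ c d hc (le_of_eq hss₂.1) s₂ hs₂ hbox₂
  by_contra hlt
  push_neg at hlt
  set e : ℝ := 2 * (s₁ - s₂) with he
  have hepos : 0 < e := by rw [he]; linarith
  set X : ℝ := C / c₀ + 1 with hX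
  have hXpos : 0 < X := by
    have : 0 ≤ C / c₀ := div_nonneg hC (le_of_lt hc₀)
    rw [hX]; linarith
  set R : ℝ := max R₀ (X ^ e⁻¹) with hR
  have hRR₀ : R₀ ≤ R := le_max_left _ _
  have hR1 : 1 ≤ R := le_trans hR₀ hRR₀
  have hRpos : 0 < R := lt_of_lt_of_le zero_lt_one hR1
  have h1 : c₀ * R ^ (2 * s₁) ≤ C * R ^ (2 * s₂) := by
    calc c₀ * R ^ (2 * s₁) ≤ (cnt F₁ R : ℝ) := hlow R hRR₀
      _ ≤ (cnt F₂ R : ℝ) := by exact_mod_cast cnt_mono_left hsub R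
      _ ≤ C * R ^ (2 * s₂) := hupp R hR1
  have hsplit : R ^ (2 * s₁) = R ^ (2 * s₂) * R ^ e := by
    rw [← Real.rpow_add hRpos]
    congr 1
    rw [he]; ring
  have h2 : c₀ * R ^ e ≤ C := by
    have hpos2 : 0 < R ^ (2 * s₂) := Real.rpow_pos_of_pos hRpos _
    rw [hsplit] at h1
    have := (div_le_div_iff_of_pos_right hpos2).mpr h1
    calc c₀ * R ^ e = c₀ * (R ^ (2 * s₂) * R ^ e) / R ^ (2 * s₂) := by
          field_simp
      _ ≤ C * R ^ (2 * s₂) / R ^ (2 * s₂) := by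
          have h1' : c₀ * (R ^ (2 * s₂) * R ^ e) ≤ C * R ^ (2 * s₂) := h1
          gcongr
      _ = C := by field_simp
  have h3 : X ≤ R ^ e := by
    calc X = (X ^ e⁻¹) ^ e := (Real.rpow_inv_rpow (le_of_lt hXpos) (ne_of_gt hepos)).symm
      _ ≤ R ^ e := Real.rpow_le_rpow (Real.rpow_nonneg (le_of_lt hXpos) _)
          (le_max_right _ _) (le_of_lt hepos)
  have h4 : c₀ * X ≤ C := le_trans (mul_le_mul_of_nonneg_left h3 (le_of_lt hc₀)) h2
  rw [hX] at h4
  have h5 : c₀ * (C / c₀) = C := by field_simp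
  nlinarith
end
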